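/- arXiv:1407.4638 — 6 statements merged into one kernel-verified Lean document; each statement's English description precedes it below -/
import Mathlib

section
/- Let λ ∈ ℂ \ {0} and f_λ(z) = λe^z. Suppose 0 < R₁ < R₂ and 0 < R₃ < R₄ satisfy R₂ > max{2R₁, R₁ + 16π, 3·log(R₄/|λ|)} and R₃ > |λ|. Let S₁ = H(R₁, R₂), S₂ = H(R₃, R₄), and let D be the union of all connected components of f_λ⁻¹(S₂) which are contained in S₁. Then dens(D, S₁) ≥ (1/(2πR₂))·log(R₄/R₃). -/
open Filter Topology Metric MeasureTheory

/-- The exponential family `f_λ(z) = λ e^z`. -/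
noncomputable def expFam (lam : ℂ) : ℂ → ℂ := fun z => lam * Complex.exp z

/-- The closed half-annulus `H(r₁, r₂) = {z : r₁ ≤ |z| ≤ r₂, Re z ≥ 0}`. -/
def halfAnnulus (r₁ r₂ : ℝ) : Set ℂ :=
  {z | r₁ ≤ ‖z‖ ∧ ‖z‖ ≤ r₂ ∧ 0 ≤ z.re}

/-- `dens(U, V) = area(U ∩ V) / area(V)`. -/
noncomputable def dens (U V : Set ℂ) : ENNReal := volume (U ∩ V) / volume V

namespace DensAux

lemma floor_bound (x t : ℝ) (ht : 0 < t) : x - t < t * (⌊x / t⌋ : ℝ) := by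
  have h := Int.sub_one_lt_floor (x / t)
  have h2 := mul_lt_mul_of_pos_left h ht
  rw [mul_sub, mul_one, mul_div_cancel₀ _ (ne_of_gt ht)] at h2
  linarith

lemma ceil_bound (x t : ℝ) (ht : 0 < t) : t * (⌈x / t⌉ : ℝ) < x + t := by
  have h := Int.ceil_lt_add_one (x / t)
  have h2 := mul_lt_mul_of_pos_left h ht
  rw [mul_add, mul_one, mul_div_cancel₀ _ (ne_of_gt ht)] at h2
  linarith

/-- A rectangle in `ℂ`. -/
def rect (a b c d : ℝ) : Set ℂ := {z : ℂ | z.re ∈ Set.Icc a b ∧ z.im ∈ Set.Icc c d}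

lemma rect_eq_preimage (a b c d : ℝ) :
    rect a b c d = Complex.measurableEquivRealProd ⁻¹' (Set.Icc a b ×ˢ Set.Icc c d) := rfl

lemma rect_measurableSet (a b c d : ℝ) : MeasurableSet (rect a b c d) := by
  rw [rect_eq_preimage]
  exact Complex.measurableEquivRealProd.measurable (measurableSet_Icc.prod measurableSet_Icc)

lemma rect_volume (a b c d : ℝ) :
    volume (rect a b c d) = ENNReal.ofReal (b - a) * ENNReal.ofReal (d - c) := by
  rw [rect_eq_preimage,
    Complex.volume_preserving_equiv_real_prod.measure_preimage
      ((measurableSet_Icc.prod measurableSet_Icc).nullMeasurableSet),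
    Measure.volume_eq_prod, Measure.prod_prod, Real.volume_Icc, Real.volume_Icc]

/-- Volume of the closed half-disk is at most `π r² / 2`. -/
lemma volume_halfDisk_le (r : ℝ) (hr : 0 < r) :
    volume (Metric.closedBall (0:ℂ) r ∩ {z : ℂ | 0 ≤ z.re}) ≤
      ENNReal.ofReal (Real.pi * r ^ 2 / 2) := by
  set B := Metric.closedBall (0:ℂ) r with hB
  set P := {z : ℂ | 0 ≤ z.re} with hP
  have hPm : MeasurableSet P := measurableSet_le measurable_const Complex.measurable_re
  have hL : volume {z : ℂ | z.re = 0} = 0 := by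
    have he : {z : ℂ | z.re = 0} =
        Complex.measurableEquivRealProd ⁻¹' (({0} : Set ℝ) ×ˢ (Set.univ : Set ℝ)) := by
      ext z; simp [Complex.measurableEquivRealProd_apply, eq_comm]
    rw [he, Complex.volume_preserving_equiv_real_prod.measure_preimage
      (((MeasurableSet.singleton 0).prod MeasurableSet.univ).nullMeasurableSet),
      Measure.volume_eq_prod, Measure.prod_prod, Real.volume_singleton, zero_mul]
  have hsub : B ∩ P ⊆ (-(B \ P)) ∪ {z : ℂ | z.re = 0} := by
    rintro z ⟨hzB, hzP⟩
    have hzP' : (0:ℝ) ≤ z.re := hzP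
    rcases eq_or_lt_of_le hzP' with h | h
    · exact Or.inr (by simpa using h.symm)
    · refine Or.inl ?_
      rw [Set.mem_neg]
      refine ⟨?_, ?_⟩
      · simp only [hB, Metric.mem_closedBall, Complex.dist_eq, sub_zero] at hzB ⊢
        simpa using hzB
      · simp only [hP, Set.mem_setOf_eq, Complex.neg_re, not_le]
        linarith
  have h1 : volume (B ∩ P) ≤ volume (B \ P) := by
    calc volume (B ∩ P) ≤ volume ((-(B \ P)) ∪ {z : ℂ | z.re = 0}) := measure_mono hsub
      _ ≤ volume (-(B \ P)) + volume {z : ℂ | z.re = 0} := measure_union_le _ _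
      _ = volume (B \ P) := by rw [hL, add_zero, Measure.measure_neg]
  have h2 : volume (B ∩ P) + volume (B \ P) = volume B := measure_inter_add_diff B hPm
  have hBvol : volume B = ENNReal.ofReal (Real.pi * r ^ 2) := by
    rw [hB, Complex.volume_closedBall, ← ENNReal.ofReal_pow hr.le, mul_comm,
      ENNReal.ofReal_mul Real.pi_pos.le, ← NNReal.coe_real_pi, ENNReal.ofReal_coe_nnreal]
  have h3 : 2 * volume (B ∩ P) ≤ ENNReal.ofReal (Real.pi * r ^ 2) := by
    rw [two_mul, ← hBvol, ← h2]
    exact add_le_add le_rfl h1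
  have h4 : ENNReal.ofReal (Real.pi * r ^ 2 / 2) = ENNReal.ofReal (Real.pi * r ^ 2) / 2 := by
    rw [ENNReal.ofReal_div_of_pos (by norm_num)]
    norm_num
  rw [h4, ENNReal.le_div_iff_mul_le (Or.inl two_ne_zero) (Or.inl ENNReal.ofNat_ne_top), mul_comm]
  exact h3

end DensAux

set_option maxHeartbeats 1200000 in
theorem dens_preimage_halfAnnulus (lam : ℂ) (hlam : lam ≠ 0) (R₁ R₂ R₃ R₄ : ℝ)
    (hR₁ : 0 < R₁) (hR₁₂ : R₁ < R₂) (hR₃ : 0 < R₃) (hR₃₄ : R₃ < R₄)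
    (hbig : max (2 * R₁) (max (R₁ + 16 * Real.pi)
      (3 * Real.log (R₄ / ‖lam‖))) < R₂)
    (hlamR₃ : ‖lam‖ < R₃)
    (D : Set ℂ)
    (hD : D = {w | w ∈ expFam lam ⁻¹' halfAnnulus R₃ R₄ ∧
      connectedComponentIn (expFam lam ⁻¹' halfAnnulus R₃ R₄) w ⊆ halfAnnulus R₁ R₂}) :
    ENNReal.ofReal (1 / (2 * Real.pi * R₂) * Real.log (R₄ / R₃)) ≤
      dens D (halfAnnulus R₁ R₂) := by
  classical
  have hπ : (0:ℝ) < Real.pi := Real.pi_pos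
  set A := ‖lam‖ with hAdef
  have hA0 : 0 < A := norm_pos_iff.mpr hlam
  set θ := lam.arg with hθdef
  set a := Real.log (R₃ / A) with hadef
  set b := Real.log (R₄ / A) with hbdef
  set F := expFam lam ⁻¹' halfAnnulus R₃ R₄ with hFdef
  -- numeric consequences of hbig
  have hb1 : 2 * R₁ < R₂ := lt_of_le_of_lt (le_max_left _ _) hbig
  have hb2 : R₁ + 16 * Real.pi < R₂ :=
    lt_of_le_of_lt (le_trans (le_max_left _ _) (le_max_right _ _)) hbig
  have hb3 : 3 * b < R₂ :=
    lt_of_le_of_lt (le_trans (le_max_right _ _) (le_max_right _ _)) hbig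
  have hR₂0 : 0 < R₂ := lt_trans hR₁ hR₁₂
  have ha0 : 0 < a := Real.log_pos (by rw [lt_div_iff₀ hA0]; linarith)
  have hb0 : 0 < b := Real.log_pos (by rw [lt_div_iff₀ hA0]; linarith)
  have hR₄ : 0 < R₄ := lt_trans hR₃ hR₃₄
  have hab : a < b := by
    apply Real.log_lt_log (div_pos hR₃ hA0)
    gcongr
  -- characterization of F
  have memF : ∀ z : ℂ, z ∈ F ↔ a ≤ z.re ∧ z.re ≤ b ∧ 0 ≤ Real.cos (z.im + θ) := by
    intro z
    have hR₄ : 0 < R₄ := lt_trans hR₃ hR₃₄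
    have habs : ‖lam * Complex.exp z‖ = A * Real.exp z.re := by
      rw [norm_mul, Complex.norm_exp]
    have hre : (lam * Complex.exp z).re = A * Real.exp z.re * Real.cos (z.im + θ) := by
      conv_lhs => rw [← Complex.norm_mul_exp_arg_mul_I lam]
      rw [mul_assoc, ← Complex.exp_add, Complex.re_ofReal_mul, Complex.exp_re]
      have h1 : ((θ:ℂ) * Complex.I + z).re = z.re := by simp
      have h2 : ((θ:ℂ) * Complex.I + z).im = θ + z.im := by simp
      rw [h1, h2, add_comm θ z.im]
      ring
    have hE0 : 0 < A * Real.exp z.re := mul_pos hA0 (Real.exp_pos _)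
    have ha_iff : a ≤ z.re ↔ R₃ ≤ A * Real.exp z.re := by
      rw [hadef, Real.log_le_iff_le_exp (div_pos hR₃ hA0), div_le_iff₀ hA0, mul_comm]
    have hb_iff : z.re ≤ b ↔ A * Real.exp z.re ≤ R₄ := by
      rw [hbdef, Real.le_log_iff_exp_le (div_pos hR₄ hA0), le_div_iff₀ hA0, mul_comm]
    have hc_iff : 0 ≤ Real.cos (z.im + θ) ↔ 0 ≤ A * Real.exp z.re * Real.cos (z.im + θ) :=
      (mul_nonneg_iff_of_pos_left hE0).symm
    simp only [hFdef, Set.mem_preimage, expFam, halfAnnulus, Set.mem_setOf_eq]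
    rw [habs, hre, ha_iff, hb_iff, hc_iff]
  -- M and its bound
  set M := Real.sqrt (R₂ ^ 2 - b ^ 2) with hMdef
  have hbR2 : b ^ 2 ≤ R₂ ^ 2 / 9 := by nlinarith
  have hM2 : M ^ 2 = R₂ ^ 2 - b ^ 2 := Real.sq_sqrt (by nlinarith)
  have hM0 : 0 ≤ M := Real.sqrt_nonneg _
  have hs2 : (1.41 : ℝ) ≤ Real.sqrt 2 := by
    nlinarith [Real.sq_sqrt (show (0:ℝ) ≤ 2 by norm_num), Real.sqrt_nonneg 2]
  have hMl : 2 * Real.sqrt 2 / 3 * R₂ ≤ M := by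
    rw [hMdef]
    rw [show (2 * Real.sqrt 2 / 3 * R₂) = Real.sqrt ((2 * Real.sqrt 2 / 3 * R₂)^2) from
      (Real.sqrt_sq (by positivity)).symm]
    apply Real.sqrt_le_sqrt
    have : Real.sqrt 2 ^ 2 = 2 := Real.sq_sqrt (by norm_num)
    nlinarith
  -- the rectangles
  set c : ℤ → ℝ := fun k => 2 * Real.pi * k - θ with hcdef
  have rect_subset_F : ∀ k : ℤ, DensAux.rect a b (c k - Real.pi/2) (c k + Real.pi/2) ⊆ F := by
    intro k z hz
    obtain ⟨⟨h1, h2⟩, h3, h4⟩ := hz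
    rw [memF]
    refine ⟨h1, h2, ?_⟩
    rw [← Real.cos_sub_int_mul_two_pi (z.im + θ) k]
    apply Real.cos_nonneg_of_mem_Icc
    simp only [hcdef] at h3 h4
    constructor <;> [skip; skip] <;> push_cast <;> linarith
  have comp_subset : ∀ k : ℤ, ∀ w ∈ DensAux.rect a b (c k - Real.pi/2) (c k + Real.pi/2),
      connectedComponentIn F w ⊆ DensAux.rect a b (c k - Real.pi/2) (c k + Real.pi/2) := by
    intro k w hw
    have hwF : w ∈ F := rect_subset_F k hw
    set u : Set ℂ := {z : ℂ | |z.im - c k| < 3*Real.pi/4} with hudef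
    set v : Set ℂ := {z : ℂ | 3*Real.pi/4 < |z.im - c k|} with hvdef
    have hcont : Continuous fun z : ℂ => |z.im - c k| :=
      (Complex.continuous_im.sub continuous_const).abs
    have huo : IsOpen u := isOpen_lt hcont continuous_const
    have hvo : IsOpen v := isOpen_lt continuous_const hcont
    have hdisjuv : Disjoint u v := by
      rw [Set.disjoint_left]
      intro z hz1 hz2
      simp only [hudef, hvdef, Set.mem_setOf_eq] at hz1 hz2
      linarith
    have hcos : ∀ z : ℂ, Real.cos (z.im + θ) = Real.cos |z.im - c k| := by
      intro z
      have e1 : z.im + θ = (z.im - c k) + (k : ℤ) * (2*Real.pi) := by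
        simp only [hcdef]; push_cast; ring
      rw [e1, Real.cos_add_int_mul_two_pi, Real.cos_abs]
    have hFuv : F ⊆ u ∪ v := by
      intro z hz
      rw [memF] at hz
      rcases lt_trichotomy (|z.im - c k|) (3*Real.pi/4) with h | h | h
      · exact Or.inl h
      · exfalso
        have hneg : Real.cos |z.im - c k| < 0 := by
          rw [h]; apply Real.cos_neg_of_pi_div_two_lt_of_lt <;> linarith
        have := hcos z
        linarith [hz.2.2]
      · exact Or.inr h
    have hwu : w ∈ u := by
      simp only [hudef, Set.mem_setOf_eq]
      obtain ⟨_, h3, h4⟩ := hw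
      rw [abs_sub_lt_iff]
      constructor <;> linarith
    have hKu : connectedComponentIn F w ⊆ u := by
      apply (isPreconnected_connectedComponentIn).subset_left_of_subset_union huo hvo hdisjuv
        (fun z hz => hFuv (connectedComponentIn_subset F w hz))
      exact ⟨w, mem_connectedComponentIn hwF, hwu⟩
    intro z hz
    have hzF := connectedComponentIn_subset F w hz
    have hzu := hKu hz
    rw [memF] at hzF
    simp only [hudef, Set.mem_setOf_eq] at hzu
    have him : |z.im - c k| ≤ Real.pi/2 := by
      by_contra hcon
      push_neg at hcon
      have hneg : Real.cos |z.im - c k| < 0 := by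
        apply Real.cos_neg_of_pi_div_two_lt_of_lt hcon
        linarith
      have := hcos z
      linarith [hzF.2.2]
    rw [abs_sub_le_iff] at him
    exact ⟨⟨hzF.1, hzF.2.1⟩, by constructor <;> linarith [him.1, him.2]⟩
  have rect_subset_S : ∀ k : ℤ,
      (∀ y : ℝ, c k - Real.pi/2 ≤ y → y ≤ c k + Real.pi/2 → R₁ ≤ |y| ∧ |y| ≤ M) →
      DensAux.rect a b (c k - Real.pi/2) (c k + Real.pi/2) ⊆ halfAnnulus R₁ R₂ := by
    intro k hk z hz
    obtain ⟨⟨h1, h2⟩, h3, h4⟩ := hz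
    obtain ⟨hy1, hy2⟩ := hk z.im h3 h4
    have hsq : ‖z‖ ^ 2 = z.re^2 + z.im^2 := by
      rw [Complex.sq_norm, Complex.normSq_apply]; ring
    have habsim : z.im^2 = |z.im|^2 := (sq_abs _).symm
    have hzabs := norm_nonneg z
    refine ⟨le_trans hy1 (Complex.abs_im_le_norm z), ?_, by linarith⟩
    have e1 : |z.im|^2 ≤ M^2 := pow_le_pow_left₀ (abs_nonneg z.im) hy2 2
    have e2 : z.re^2 ≤ b^2 := pow_le_pow_left₀ (by linarith) h2 2
    have e3 : ‖z‖^2 ≤ R₂^2 := by linarith [hsq, habsim, hM2]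
    nlinarith [e3, hzabs, hR₂0]
  -- index sets
  set k₀p : ℤ := ⌈(R₁ + Real.pi/2 + θ) / (2*Real.pi)⌉ with hk0p
  set k₁p : ℤ := ⌊(M - Real.pi/2 + θ) / (2*Real.pi)⌋ with hk1p
  set k₀n : ℤ := ⌈(-M + Real.pi/2 + θ) / (2*Real.pi)⌉ with hk0n
  set k₁n : ℤ := ⌊(-R₁ - Real.pi/2 + θ) / (2*Real.pi)⌋ with hk1n
  set K : Finset ℤ := Finset.Icc k₀n k₁n ∪ Finset.Icc k₀p k₁p with hKdef
  have hgoodp : ∀ k ∈ Finset.Icc k₀p k₁p, R₁ + Real.pi/2 ≤ c k ∧ c k ≤ M - Real.pi/2 := by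
    intro k hk
    rw [Finset.mem_Icc] at hk
    have h1 := Int.ceil_le.mp hk.1
    have h2 := Int.le_floor.mp hk.2
    rw [div_le_iff₀ (by positivity : (0:ℝ) < 2*Real.pi)] at h1
    rw [le_div_iff₀ (by positivity : (0:ℝ) < 2*Real.pi)] at h2
    constructor <;> simp only [hcdef] <;> linarith
  have hgoodn : ∀ k ∈ Finset.Icc k₀n k₁n, -M + Real.pi/2 ≤ c k ∧ c k ≤ -R₁ - Real.pi/2 := by
    intro k hk
    rw [Finset.mem_Icc] at hk
    have h1 := Int.ceil_le.mp hk.1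
    have h2 := Int.le_floor.mp hk.2
    rw [div_le_iff₀ (by positivity : (0:ℝ) < 2*Real.pi)] at h1
    rw [le_div_iff₀ (by positivity : (0:ℝ) < 2*Real.pi)] at h2
    constructor <;> simp only [hcdef] <;> linarith
  have hKgood : ∀ k ∈ K, ∀ y : ℝ, c k - Real.pi/2 ≤ y → y ≤ c k + Real.pi/2 →
      R₁ ≤ |y| ∧ |y| ≤ M := by
    intro k hk y hy1 hy2
    rw [hKdef, Finset.mem_union] at hk
    rcases hk with hk | hk
    · obtain ⟨h1, h2⟩ := hgoodn k hk
      have hyneg : y ≤ -R₁ := by linarith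
      rw [abs_of_nonpos (by linarith)]
      constructor <;> linarith
    · obtain ⟨h1, h2⟩ := hgoodp k hk
      rw [abs_of_nonneg (by linarith)]
      constructor <;> linarith
  -- cardinality bound
  have hdisjK : Disjoint (Finset.Icc k₀n k₁n) (Finset.Icc k₀p k₁p) := by
    rw [Finset.disjoint_left]
    intro k hk1 hk2
    have e1 := (hgoodn k hk1).2
    have e2 := (hgoodp k hk2).1
    linarith
  have hcard : R₂ / (4 * Real.pi) ≤ (K.card : ℝ) := by
    have hcardeq : K.card = (Finset.Icc k₀n k₁n).card + (Finset.Icc k₀p k₁p).card :=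
      Finset.card_union_of_disjoint hdisjK
    have cp : (k₁p:ℝ) + 1 - k₀p ≤ ((Finset.Icc k₀p k₁p).card : ℝ) := by
      rw [Int.card_Icc]
      have h : ((k₁p + 1 - k₀p : ℤ) : ℝ) ≤ (((k₁p + 1 - k₀p).toNat : ℤ) : ℝ) := by
        exact_mod_cast Int.self_le_toNat (k₁p + 1 - k₀p)
      push_cast at h ⊢
      linarith
    have cn : (k₁n:ℝ) + 1 - k₀n ≤ ((Finset.Icc k₀n k₁n).card : ℝ) := by
      rw [Int.card_Icc]
      have h : ((k₁n + 1 - k₀n : ℤ) : ℝ) ≤ (((k₁n + 1 - k₀n).toNat : ℤ) : ℝ) := by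
        exact_mod_cast Int.self_le_toNat (k₁n + 1 - k₀n)
      push_cast at h ⊢
      linarith
    have h2π : (0:ℝ) < 2*Real.pi := by linarith
    have f1 : (M - Real.pi/2 + θ) - 2*Real.pi < 2*Real.pi*(k₁p:ℝ) :=
      DensAux.floor_bound _ _ h2π
    have f2 : 2*Real.pi*(k₀p:ℝ) < (R₁ + Real.pi/2 + θ) + 2*Real.pi :=
      DensAux.ceil_bound _ _ h2π
    have f3 : (-R₁ - Real.pi/2 + θ) - 2*Real.pi < 2*Real.pi*(k₁n:ℝ) :=
      DensAux.floor_bound _ _ h2π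
    have f4 : 2*Real.pi*(k₀n:ℝ) < (-M + Real.pi/2 + θ) + 2*Real.pi :=
      DensAux.ceil_bound _ _ h2π
    have g1 : M - R₁ - 3*Real.pi ≤ 2*Real.pi*(((Finset.Icc k₀p k₁p).card : ℝ)) := by
      have h := mul_le_mul_of_nonneg_left cp h2π.le
      linarith
    have g2 : M - R₁ - 3*Real.pi ≤ 2*Real.pi*(((Finset.Icc k₀n k₁n).card : ℝ)) := by
      have h := mul_le_mul_of_nonneg_left cn h2π.le
      linarith
    have hM4 : R₂ + 4*R₁ + 12*Real.pi ≤ 4*M := by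
      nlinarith [hs2, hMl, hb1, hb2, hπ, hR₁, hR₂0]
    have hcc : (K.card : ℝ) =
        ((Finset.Icc k₀n k₁n).card : ℝ) + ((Finset.Icc k₀p k₁p).card : ℝ) := by
      rw [hcardeq]; push_cast; ring
    rw [div_le_iff₀ (by linarith : (0:ℝ) < 4*Real.pi)]
    rw [hcc]
    linarith [g1, g2, hM4]
  -- the union
  set E : Set ℂ := ⋃ k ∈ K, DensAux.rect a b (c k - Real.pi/2) (c k + Real.pi/2) with hEdef
  have rvol : ∀ k : ℤ, volume (DensAux.rect a b (c k - Real.pi/2) (c k + Real.pi/2))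
      = ENNReal.ofReal ((b - a) * Real.pi) := by
    intro k
    rw [DensAux.rect_volume,
      show (c k + Real.pi/2) - (c k - Real.pi/2) = Real.pi by ring,
      ← ENNReal.ofReal_mul (by linarith : (0:ℝ) ≤ b - a)]
  have hpd : ((K : Finset ℤ) : Set ℤ).PairwiseDisjoint
      (fun k => DensAux.rect a b (c k - Real.pi/2) (c k + Real.pi/2)) := by
    intro i _ j _ hij
    apply Set.disjoint_left.mpr
    rintro z ⟨_, hi⟩ ⟨_, hj⟩
    have hone : (1:ℝ) ≤ |(i:ℝ) - (j:ℝ)| := by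
      have := Int.one_le_abs (sub_ne_zero.mpr hij)
      exact_mod_cast this
    obtain ⟨hi1, hi2⟩ := hi
    obtain ⟨hj1, hj2⟩ := hj
    simp only [hcdef] at hi1 hi2 hj1 hj2
    rcases abs_cases ((i:ℝ) - (j:ℝ)) with ⟨he, _⟩ | ⟨he, _⟩ <;>
      rw [he] at hone <;>
      have hm := mul_le_mul_of_nonneg_left hone hπ.le <;>
      linarith
  have hE_vol : volume E = K.card * ENNReal.ofReal ((b - a) * Real.pi) := by
    rw [hEdef, measure_biUnion_finset hpd (fun k _ => DensAux.rect_measurableSet _ _ _ _)]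
    rw [Finset.sum_congr rfl (fun k _ => rvol k), Finset.sum_const, nsmul_eq_mul]
  have hE_sub : E ⊆ D ∩ halfAnnulus R₁ R₂ := by
    rw [hEdef, Set.iUnion₂_subset_iff]
    intro k hk
    have hsub1 : DensAux.rect a b (c k - Real.pi/2) (c k + Real.pi/2) ⊆ halfAnnulus R₁ R₂ :=
      rect_subset_S k (fun y h1 h2 => hKgood k hk y h1 h2)
    intro w hw
    refine ⟨?_, hsub1 hw⟩
    rw [hD]
    exact ⟨rect_subset_F k hw, (comp_subset k w hw).trans hsub1⟩
  -- volume of S₁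
  have hS_vol : volume (halfAnnulus R₁ R₂) ≤ ENNReal.ofReal (Real.pi * R₂ ^ 2 / 2) := by
    refine le_trans (measure_mono ?_) (DensAux.volume_halfDisk_le R₂ hR₂0)
    rintro z ⟨h1, h2, h3⟩
    exact ⟨by simpa [Complex.dist_eq] using h2, h3⟩
  -- final computation
  have hnum : ENNReal.ofReal ((K.card : ℝ) * ((b - a) * Real.pi)) ≤ volume (D ∩ halfAnnulus R₁ R₂) := by
    refine le_trans ?_ (measure_mono hE_sub)
    rw [hE_vol, ENNReal.ofReal_mul (Nat.cast_nonneg _), ENNReal.ofReal_natCast]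
  have hba : b - a = Real.log (R₄ / R₃) := by
    rw [hbdef, hadef, Real.log_div (ne_of_gt hR₄) (ne_of_gt hA0),
      Real.log_div (ne_of_gt hR₃) (ne_of_gt hA0), Real.log_div (ne_of_gt hR₄) (ne_of_gt hR₃)]
    ring
  rw [dens]
  calc ENNReal.ofReal (1 / (2 * Real.pi * R₂) * Real.log (R₄ / R₃))
      ≤ ENNReal.ofReal ((K.card : ℝ) * ((b - a) * Real.pi)) / ENNReal.ofReal (Real.pi * R₂ ^ 2 / 2) := by
        rw [← ENNReal.ofReal_div_of_pos (div_pos (mul_pos hπ (pow_pos hR₂0 2)) two_pos)]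
        apply ENNReal.ofReal_le_ofReal
        rw [hba]
        have hL : 0 ≤ Real.log (R₄/R₃) := Real.log_nonneg (by rw [le_div_iff₀ hR₃]; linarith)
        have hc2 : R₂ ≤ 4*Real.pi*(K.card : ℝ) := by
          rw [div_le_iff₀ (by linarith : (0:ℝ) < 4*Real.pi)] at hcard
          linarith
        rw [one_div, inv_mul_eq_div,
          div_le_div_iff₀ (by nlinarith : (0:ℝ) < 2*Real.pi*R₂)
          (div_pos (mul_pos hπ (pow_pos hR₂0 2)) two_pos)]
        have hkey := mul_le_mul_of_nonneg_left hc2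
          (mul_nonneg (mul_nonneg (mul_nonneg hL hπ.le) hR₂0.le) (by norm_num : (0:ℝ) ≤ 1/2))
        nlinarith [hkey]
    _ ≤ volume (D ∩ halfAnnulus R₁ R₂) / volume (halfAnnulus R₁ R₂) :=
        ENNReal.div_le_div hnum hS_vol
end

section
/- There exist absolute constants s₀ > 0 and τ₀ > 1 (independent of λ) such that the following holds. Suppose λ ∈ ℂ \ {0}, f_λ(z) = λe^z, n ∈ ℕ, and V ⊆ ℂ is a set such that for every m with 0 ≤ m < n, the image f_λ^m(V) is contained in {z : Re(z) > log(2/|λ|)} and has Euclidean diameter less than s₀. Then the distortion of f_λⁿ on V satisfies D_V(f_λⁿ) ≤ τ₀. -/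
open Filter Topology Metric MeasureTheory

/-- The distortion `D_V(g) = sup_{z ∈ V} |g'(z)| / inf_{z ∈ V} |g'(z)|`. -/
noncomputable def distortion (g : ℂ → ℂ) (V : Set ℂ) : ℝ :=
  sSup ((fun z => ‖deriv g z‖) '' V) /
    sInf ((fun z => ‖deriv g z‖) '' V)

lemma expFam_differentiable (lam : ℂ) : Differentiable ℂ (expFam lam) :=
  Complex.differentiable_exp.const_mul lam

lemma deriv_expFam (lam : ℂ) (z : ℂ) : deriv (expFam lam) z = lam * Complex.exp z := by
  have h : expFam lam = fun z => lam * Complex.exp z := rfl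
  rw [h, deriv_const_mul _ Complex.differentiableAt_exp, Complex.deriv_exp]

lemma iterate_differentiable (lam : ℂ) (n : ℕ) : Differentiable ℂ ((expFam lam)^[n]) := by
  induction n with
  | zero => simpa using differentiable_id
  | succ n ih =>
    rw [Function.iterate_succ']
    exact (expFam_differentiable lam).comp ih

lemma deriv_iterate (lam : ℂ) (n : ℕ) (z : ℂ) :
    deriv ((expFam lam)^[n]) z =
      ∏ m ∈ Finset.range n, (lam * Complex.exp ((expFam lam)^[m] z)) := by
  induction n with
  | zero => simp
  | succ n ih =>
    rw [Function.iterate_succ', Finset.prod_range_succ]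
    rw [deriv_comp _ ((expFam_differentiable lam).differentiableAt)
      ((iterate_differentiable lam n).differentiableAt)]
    rw [deriv_expFam, ih]
    ring

lemma abs_deriv_iterate (lam : ℂ) (n : ℕ) (z : ℂ) :
    ‖deriv ((expFam lam)^[n]) z‖ =
      ∏ m ∈ Finset.range n, (‖lam‖ * Real.exp (((expFam lam)^[m] z).re)) := by
  rw [deriv_iterate, norm_prod]
  exact Finset.prod_congr rfl fun m _ => by rw [norm_mul, Complex.norm_exp]

lemma expansion_step (lam : ℂ) (hlam : lam ≠ 0) (z w : ℂ)
    (hw : Real.log (2 / ‖lam‖) < w.re)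
    (hd : ‖z - w‖ ≤ 1/4) :
    ‖z - w‖ ≤ (2/3) * ‖expFam lam z - expFam lam w‖ := by
  have hlampos : 0 < ‖lam‖ := by
    simpa [norm_pos_iff] using hlam
  set u : ℂ := z - w with hu
  have hfact : expFam lam z - expFam lam w = lam * Complex.exp w * (Complex.exp u - 1) := by
    have : Complex.exp z = Complex.exp w * Complex.exp u := by
      rw [← Complex.exp_add, hu]; ring_nf
    simp only [expFam, this]; ring
  have habs : ‖expFam lam z - expFam lam w‖
      = ‖lam‖ * Real.exp w.re * ‖Complex.exp u - 1‖ := by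
    rw [hfact, norm_mul, norm_mul, Complex.norm_exp]
  -- lower bound for |λ| e^{Re w}
  have hA : 2 ≤ ‖lam‖ * Real.exp w.re := by
    have h2 : (0:ℝ) < 2 / ‖lam‖ := by positivity
    have := Real.exp_le_exp.mpr hw.le
    rw [Real.exp_log h2] at this
    calc (2:ℝ) = ‖lam‖ * (2 / ‖lam‖) := by
          field_simp
      _ ≤ ‖lam‖ * Real.exp w.re := by
          exact mul_le_mul_of_nonneg_left this hlampos.le
  -- lower bound for |e^u - 1|
  have hu1 : ‖u‖ ≤ 1 := by linarith
  have hsq := Complex.norm_exp_sub_one_sub_id_le hu1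
  have htri : ‖u‖ ≤ ‖Complex.exp u - 1‖ + ‖Complex.exp u - 1 - u‖ := by
    have : u = (Complex.exp u - 1) - (Complex.exp u - 1 - u) := by ring
    calc ‖u‖ = ‖(Complex.exp u - 1) - (Complex.exp u - 1 - u)‖ := by rw [← this]
      _ ≤ _ := norm_sub_le _ _
  have hsq' : ‖u‖ ^ 2 ≤ (1/4) * ‖u‖ := by
    have := norm_nonneg u
    nlinarith
  have hB : (3/4) * ‖u‖ ≤ ‖Complex.exp u - 1‖ := by nlinarith
  rw [habs]
  have hBnn : (0:ℝ) ≤ ‖Complex.exp u - 1‖ := norm_nonneg _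
  nlinarith [mul_le_mul hA hB (by positivity) (by linarith)]

lemma dist_lt_of_diam {s : Set ℂ} {r : ℝ} (hdiam : EMetric.diam s < ENNReal.ofReal r)
    {x y : ℂ} (hx : x ∈ s) (hy : y ∈ s) : ‖x - y‖ < r := by
  have h := lt_of_le_of_lt (EMetric.edist_le_diam_of_mem hx hy) hdiam
  rw [edist_lt_ofReal] at h
  rwa [Complex.dist_eq] at h

lemma chain (lam : ℂ) (hlam : lam ≠ 0) (n : ℕ) (V : Set ℂ)
    (h : ∀ m, m < n →
      (expFam lam)^[m] '' V ⊆ {z : ℂ | Real.log (2 / ‖lam‖) < z.re} ∧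
        EMetric.diam ((expFam lam)^[m] '' V) < ENNReal.ofReal (1/4))
    (z w : ℂ) (hz : z ∈ V) (hw : w ∈ V) :
    ∀ j m, m < n → n - 1 - m = j →
      ‖(expFam lam)^[m] z - (expFam lam)^[m] w‖ ≤ (1/4) * (2/3)^j := by
  intro j
  induction j with
  | zero =>
    intro m hm _
    have := dist_lt_of_diam (h m hm).2 (Set.mem_image_of_mem _ hz) (Set.mem_image_of_mem _ hw)
    simpa using this.le
  | succ j ih =>
    intro m hm hj
    have hm1 : m + 1 < n := by omega
    have hj' : n - 1 - (m + 1) = j := by omega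
    have hb := ih (m + 1) hm1 hj'
    have hdm : ‖(expFam lam)^[m] z - (expFam lam)^[m] w‖ ≤ 1/4 :=
      (dist_lt_of_diam (h m hm).2 (Set.mem_image_of_mem _ hz) (Set.mem_image_of_mem _ hw)).le
    have hre : Real.log (2 / ‖lam‖) < ((expFam lam)^[m] w).re :=
      (h m hm).1 (Set.mem_image_of_mem _ hw)
    have hstep := expansion_step lam hlam ((expFam lam)^[m] z) ((expFam lam)^[m] w) hre hdm
    rw [← Function.iterate_succ_apply' (expFam lam) m z,
        ← Function.iterate_succ_apply' (expFam lam) m w] at hstep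
    calc ‖(expFam lam)^[m] z - (expFam lam)^[m] w‖
        ≤ (2/3) * ‖(expFam lam)^[m+1] z - (expFam lam)^[m+1] w‖ := hstep
      _ ≤ (2/3) * ((1/4) * (2/3)^j) := by linarith
      _ = (1/4) * (2/3)^(j+1) := by ring

lemma key_ratio (lam : ℂ) (hlam : lam ≠ 0) (n : ℕ) (V : Set ℂ)
    (h : ∀ m, m < n →
      (expFam lam)^[m] '' V ⊆ {z : ℂ | Real.log (2 / ‖lam‖) < z.re} ∧
        EMetric.diam ((expFam lam)^[m] '' V) < ENNReal.ofReal (1/4))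
    (z w : ℂ) (hz : z ∈ V) (hw : w ∈ V) :
    ‖deriv ((expFam lam)^[n]) z‖ ≤
      Real.exp 1 * ‖deriv ((expFam lam)^[n]) w‖ := by
  have hprod : ∀ x : ℂ,
      ∏ m ∈ Finset.range n, (‖lam‖ * Real.exp (((expFam lam)^[m] x).re))
        = ‖lam‖ ^ n * Real.exp (∑ m ∈ Finset.range n, ((expFam lam)^[m] x).re) := by
    intro x
    rw [Finset.prod_mul_distrib, Finset.prod_const, Real.exp_sum, Finset.card_range]
  rw [abs_deriv_iterate, abs_deriv_iterate, hprod, hprod]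
  set Sa := ∑ m ∈ Finset.range n, ((expFam lam)^[m] z).re
  set Sb := ∑ m ∈ Finset.range n, ((expFam lam)^[m] w).re
  have hsum : Sa - Sb ≤ 1 := by
    have heq : Sa - Sb = ∑ m ∈ Finset.range n,
        (((expFam lam)^[m] z).re - ((expFam lam)^[m] w).re) := by
      rw [Finset.sum_sub_distrib]
    have hterm : ∀ m ∈ Finset.range n,
        ((expFam lam)^[m] z).re - ((expFam lam)^[m] w).re ≤ (1/4) * (2/3)^(n - 1 - m) := by
      intro m hm
      rw [Finset.mem_range] at hm
      have h1 : ((expFam lam)^[m] z).re - ((expFam lam)^[m] w).re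
          ≤ ‖(expFam lam)^[m] z - (expFam lam)^[m] w‖ := by
        have := Complex.re_le_norm ((expFam lam)^[m] z - (expFam lam)^[m] w)
        simpa [Complex.sub_re] using this
      exact h1.trans (chain lam hlam n V h z w hz hw (n - 1 - m) m hm rfl)
    have hgeom : ∑ m ∈ Finset.range n, (1/4 : ℝ) * (2/3)^(n - 1 - m) ≤ 1 := by
      have hrefl : ∑ m ∈ Finset.range n, ((2:ℝ)/3)^(n - 1 - m)
          = ∑ m ∈ Finset.range n, ((2:ℝ)/3)^m := by
        exact Finset.sum_range_reflect (fun m => ((2:ℝ)/3)^m) n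
      have hle3 : ∑ m ∈ Finset.range n, ((2:ℝ)/3)^m ≤ 3 := by
        rw [geom_sum_eq (by norm_num : (2/3 : ℝ) ≠ 1)]
        have : (0:ℝ) ≤ (2/3 : ℝ)^n := by positivity
        rw [div_le_iff_of_neg (by norm_num : (2/3 : ℝ) - 1 < 0)]
        linarith
      calc ∑ m ∈ Finset.range n, (1/4 : ℝ) * (2/3)^(n - 1 - m)
          = (1/4) * ∑ m ∈ Finset.range n, ((2:ℝ)/3)^(n - 1 - m) := by
            rw [Finset.mul_sum]
        _ = (1/4) * ∑ m ∈ Finset.range n, ((2:ℝ)/3)^m := by rw [hrefl]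
        _ ≤ (1/4) * 3 := by linarith
        _ ≤ 1 := by norm_num
    calc Sa - Sb = _ := heq
      _ ≤ ∑ m ∈ Finset.range n, (1/4 : ℝ) * (2/3)^(n - 1 - m) := Finset.sum_le_sum hterm
      _ ≤ 1 := hgeom
  have hcn : (0:ℝ) ≤ ‖lam‖ ^ n := by positivity
  calc ‖lam‖ ^ n * Real.exp Sa
      ≤ ‖lam‖ ^ n * (Real.exp 1 * Real.exp Sb) := by
        apply mul_le_mul_of_nonneg_left _ hcn
        rw [← Real.exp_add]
        exact Real.exp_le_exp.mpr (by linarith)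
    _ = Real.exp 1 * (‖lam‖ ^ n * Real.exp Sb) := by ring

theorem exists_absolute_distortion_bound :
    ∃ s₀ τ₀ : ℝ, 0 < s₀ ∧ 1 < τ₀ ∧
      ∀ (lam : ℂ), lam ≠ 0 → ∀ (n : ℕ) (V : Set ℂ),
        (∀ m, m < n →
          (expFam lam)^[m] '' V ⊆ {z : ℂ | Real.log (2 / ‖lam‖) < z.re} ∧
            EMetric.diam ((expFam lam)^[m] '' V) < ENNReal.ofReal s₀) →
        distortion ((expFam lam)^[n]) V ≤ τ₀ := by
  refine ⟨1/4, Real.exp 1, by norm_num, ?_, ?_⟩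
  · have := Real.add_one_le_exp 1
    linarith
  intro lam hlam n V h
  have hexp1 : (0:ℝ) < Real.exp 1 := Real.exp_pos 1
  unfold distortion
  set g : ℂ → ℝ := fun x => ‖deriv ((expFam lam)^[n]) x‖ with hg
  set S : Set ℝ := g '' V with hSdef
  rcases V.eq_empty_or_nonempty with rfl | ⟨z₀, hz₀⟩
  · rw [show S = ∅ by simp [hSdef], Real.sSup_empty, Real.sInf_empty]
    simpa using hexp1.le
  · have hkey : ∀ z ∈ V, ∀ w ∈ V, g z ≤ Real.exp 1 * g w :=
      fun z hz w hw => key_ratio lam hlam n V h z w hz hw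
    have hgpos : ∀ w ∈ V, 0 < g w := by
      intro w hw
      rw [hg]
      simp only [abs_deriv_iterate]
      apply Finset.prod_pos
      intro m _
      have : 0 < ‖lam‖ := by simpa [norm_pos_iff] using hlam
      positivity
    have hne : S.Nonempty := ⟨g z₀, Set.mem_image_of_mem _ hz₀⟩
    have hbdd : BddAbove S := by
      refine ⟨Real.exp 1 * g z₀, ?_⟩
      rintro a ⟨x, hx, rfl⟩
      exact hkey x hx z₀ hz₀
    have h1 : ∀ w ∈ V, sSup S ≤ Real.exp 1 * g w := by
      intro w hw
      apply csSup_le hne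
      rintro a ⟨x, hx, rfl⟩
      exact hkey x hx w hw
    have h2 : sSup S / Real.exp 1 ≤ sInf S := by
      apply le_csInf hne
      rintro a ⟨x, hx, rfl⟩
      rw [div_le_iff₀ hexp1]
      calc sSup S ≤ Real.exp 1 * g x := h1 x hx
        _ = g x * Real.exp 1 := by ring
    have h3 : 0 < sSup S :=
      lt_of_lt_of_le (hgpos z₀ hz₀) (le_csSup hbdd (Set.mem_image_of_mem _ hz₀))
    have h4 : 0 < sInf S := lt_of_lt_of_le (by positivity) h2
    rw [div_le_iff₀ h4]
    rw [div_le_iff₀ hexp1] at h2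
    linarith
end

section
/- Suppose that f is a transcendental entire function and that the uniformly slowly escaping set L_U(f) is non-empty. Then there exist positive constants c and r₀, and d > 1, such that for all r ≥ r₀ there exists ρ ∈ (r, dr) with m(ρ, f) ≤ c. -/
open Filter Topology Metric MeasureTheory

/-- The uniformly slowly escaping set `L_U(f)`. -/
def uniformlySlowlyEscaping (f : ℂ → ℂ) : Set ℂ :=
  {z | ∃ (N : ℕ) (R C₁ C₂ : ℝ), 1 < R ∧ 0 < C₁ ∧ C₁ < C₂ ∧
    ∀ n, N ≤ n → C₁ * R ^ n ≤ ‖f^[n] z‖ ∧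
      ‖f^[n] z‖ ≤ C₂ * R ^ n}

/-- The minimum modulus `m(r, f) = min_{|z| = r} |f(z)|`. -/
noncomputable def minMod (f : ℂ → ℂ) (r : ℝ) : ℝ :=
  sInf ((fun z => ‖f z‖) '' Metric.sphere (0 : ℂ) r)

open scoped NNReal ENNReal

lemma minMod_le' (f : ℂ → ℂ) (ζ : ℂ) : minMod f (‖ζ‖) ≤ ‖f ζ‖ := by
  apply csInf_le
  · exact ⟨0, by rintro x ⟨w, -, rfl⟩; positivity⟩
  · exact ⟨ζ, by simp, rfl⟩

set_option maxHeartbeats 1600000 in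
lemma growth_lemma (f : ℂ → ℂ) (hf : Differentiable ℂ f)
    (htrans : ¬∃ p : Polynomial ℂ, ∀ z, f z = Polynomial.eval z p) (k : ℕ) :
    ∃ Rk : ℝ, 1 ≤ Rk ∧ ∀ ρ, Rk ≤ ρ → ∃ w, ‖w‖ = ρ ∧ ρ ^ k ≤ ‖f w‖ := by
  by_contra hcon
  push_neg at hcon
  set p := cauchyPowerSeries f 0 ((1:ℝ≥0):ℝ) with hp
  have hps : HasFPowerSeriesOnBall f p 0 ⊤ := hf.hasFPowerSeriesOnBall 0 one_pos
  -- all coefficients above k vanish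
  have hvanish : ∀ m, k < m → p m = 0 := by
    intro m hm
    have hbound : ∀ j : ℕ, 1 ≤ j → ‖p m‖ ≤ (1:ℝ) / (j : ℝ) ^ (m - k) := by
      intro j hj
      have hj1 : (1:ℝ) ≤ (j:ℝ) := by exact_mod_cast hj
      obtain ⟨ρ, hρj, hsmall⟩ := hcon (j:ℝ) hj1
      have hρ1 : (1:ℝ) ≤ ρ := le_trans hj1 hρj
      have hρ0 : (0:ℝ) < ρ := lt_of_lt_of_le one_pos hρ1
      have hcoe : ((ρ.toNNReal : ℝ≥0) : ℝ) = ρ := Real.coe_toNNReal _ hρ0.le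
      have hps2 : HasFPowerSeriesOnBall f (cauchyPowerSeries f 0 ρ.toNNReal) 0 ⊤ :=
        hf.hasFPowerSeriesOnBall 0 (by simpa using hρ0)
      have hpeq : p = cauchyPowerSeries f 0 ρ.toNNReal :=
        hps.hasFPowerSeriesAt.eq_formalMultilinearSeries hps2.hasFPowerSeriesAt
      have hint : (∫ θ : ℝ in (0)..2 * Real.pi, ‖f (circleMap 0 (ρ.toNNReal : ℝ) θ)‖)
          ≤ 2 * Real.pi * ρ ^ k := by
        have : ∀ θ ∈ Set.Icc (0:ℝ) (2 * Real.pi), ‖f (circleMap 0 (ρ.toNNReal : ℝ) θ)‖ ≤ ρ ^ k := by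
          intro θ _
          have habs : ‖circleMap 0 (ρ.toNNReal : ℝ) θ‖ = ρ := by
            rw [norm_circleMap_zero]
            rw [hcoe, abs_of_pos hρ0]
          have := hsmall _ habs
          simpa using this.le
        calc (∫ θ : ℝ in (0)..2 * Real.pi, ‖f (circleMap 0 (ρ.toNNReal : ℝ) θ)‖)
            ≤ ∫ _ : ℝ in (0)..2 * Real.pi, ρ ^ k := by
              apply intervalIntegral.integral_mono_on Real.two_pi_pos.le
              · exact ((hf.continuous.norm).comp (continuous_circleMap _ _)).intervalIntegrable _ _
              · exact intervalIntegrable_const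
              · exact this
          _ = 2 * Real.pi * ρ ^ k := by simp [mul_comm]
      have hnorm := norm_cauchyPowerSeries_le f 0 ((ρ.toNNReal : ℝ≥0) : ℝ) m
      rw [hcoe] at hnorm hpeq hint
      rw [← hpeq] at hnorm
      have h2pi : (0:ℝ) < (2 * Real.pi)⁻¹ := by positivity
      have : ‖p m‖ ≤ ((2 * Real.pi)⁻¹ * (2 * Real.pi * ρ ^ k)) * |ρ|⁻¹ ^ m := by
        refine le_trans hnorm ?_
        apply mul_le_mul_of_nonneg_right (by exact mul_le_mul_of_nonneg_left hint h2pi.le)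
        positivity
      have hsimp : ((2 * Real.pi)⁻¹ * (2 * Real.pi * ρ ^ k)) * |ρ|⁻¹ ^ m
          = ρ ^ k / ρ ^ m := by
        rw [abs_of_pos hρ0]
        field_simp
        rw [← mul_pow, one_div_mul_cancel hρ0.ne', one_pow]
      rw [hsimp] at this
      refine le_trans this ?_
      rw [div_le_div_iff₀ (by positivity) (by positivity)]
      have hmk : m = k + (m - k) := by omega
      calc ρ ^ k * (j:ℝ) ^ (m - k) ≤ ρ ^ k * ρ ^ (m - k) := by
            apply mul_le_mul_of_nonneg_left (pow_le_pow_left₀ (by linarith) hρj _) (by positivity)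
        _ = ρ ^ m := by rw [← pow_add]; congr 1; omega
        _ = 1 * ρ ^ m := by ring
    have : ‖p m‖ ≤ 0 := by
      have htend : Tendsto (fun j : ℕ => (1:ℝ) / (j : ℝ) ^ (m - k)) atTop (𝓝 0) := by
        apply Tendsto.div_atTop tendsto_const_nhds
        exact (tendsto_pow_atTop (by omega : m - k ≠ 0)).comp tendsto_natCast_atTop_atTop
      exact ge_of_tendsto htend (eventually_atTop.2 ⟨1, fun j hj => hbound j hj⟩)
    exact norm_le_zero_iff.mp this
  -- f is a polynomial
  apply htrans
  refine ⟨∑ m ∈ Finset.range (k+1), Polynomial.C (p.coeff m) * Polynomial.X ^ m, fun w => ?_⟩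
  have hsum : HasSum (fun m : ℕ => p m fun _ => w) (f w) := by
    simpa using hps.hasSum (y := w) (by simp [EMetric.mem_ball])
  have hsum2 : HasSum (fun m : ℕ => p m fun _ => w)
      (∑ m ∈ Finset.range (k+1), (p m fun _ => w)) := by
    apply hasSum_sum_of_ne_finset_zero
    intro m hm
    have : p m = 0 := hvanish m (by simpa using Nat.lt_of_succ_le (Nat.not_lt.mp (by simpa [Finset.mem_range] using hm)))
    simp [this]
  rw [hsum.unique hsum2, Polynomial.eval_finset_sum]
  refine Finset.sum_congr rfl fun m _ => ?_
  rw [FormalMultilinearSeries.apply_eq_pow_smul_coeff, smul_eq_mul]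
  rw [Polynomial.eval_mul, Polynomial.eval_C, Polynomial.eval_pow, Polynomial.eval_X]; ring

set_option maxHeartbeats 1600000 in
lemma harnack_step (f : ℂ → ℂ) (hf : Differentiable ℂ f) (z0 : ℂ) (s : ℝ) (hs : 0 < s)
    (hpos : ∀ z ∈ Metric.ball z0 s, 1 < ‖f z‖) :
    ∀ z, dist z z0 ≤ s / 2 →
      Real.log (‖f z0‖) ≤ 18 * Real.log (‖f z‖) := by
  have hne : ∀ z ∈ Metric.ball z0 s, f z ≠ 0 := by
    intro z hz h0
    have := hpos z hz
    rw [h0] at this; simp at this; linarith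
  -- the logarithmic derivative
  set q : ℂ → ℂ := fun z => deriv f z / f z with hq
  have hderiv : Differentiable ℂ (deriv f) := by
    intro y
    exact (((hf.differentiableOn.analyticOnNhd isOpen_univ).deriv) y trivial).differentiableAt
  have hsub : Metric.closedBall z0 (3*s/4) ⊆ Metric.ball z0 s := by
    apply Metric.closedBall_subset_ball; linarith
  have hdq : DifferentiableOn ℂ q (Metric.closedBall z0 (3*s/4)) := by
    apply DifferentiableOn.div
    · exact hderiv.differentiableOn
    · exact hf.differentiableOn
    · intro z hz; exact hne z (hsub hz)
  have h34 : (0:ℝ) < 3*s/4 := by linarith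
  have hcoe34 : ((3*s/4).toNNReal : ℝ) = 3*s/4 := Real.coe_toNNReal _ h34.le
  have hps : HasFPowerSeriesOnBall q (cauchyPowerSeries q z0 (3*s/4)) z0 (3*s/4).toNNReal := by
    have := (hdq.mono (Metric.closedBall_subset_closedBall hcoe34.le)).hasFPowerSeriesOnBall
      (R := (3*s/4).toNNReal) (by simpa using h34)
    rwa [hcoe34] at this
  set P := cauchyPowerSeries q z0 (3*s/4) with hP
  -- coefficient bounds below radius
  have hradius : ((5*s/8).toNNReal : ℝ≥0∞) < P.radius := by
    apply lt_of_lt_of_le _ hps.r_le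
    rw [ENNReal.coe_lt_coe, ← NNReal.coe_lt_coe, hcoe34, Real.coe_toNNReal _ (by linarith : (0:ℝ) ≤ 5*s/8)]
    linarith
  obtain ⟨C, hC0, hCb⟩ := P.norm_mul_pow_le_of_lt_radius hradius
  have hCb' : ∀ n, ‖P n‖ * (5*s/8) ^ n ≤ C := by
    intro n
    have := hCb n
    rwa [Real.coe_toNNReal _ (by linarith : (0:ℝ) ≤ 5*s/8)] at this
  have hcoeff : ∀ n, ‖P.coeff n‖ ≤ ‖P n‖ := by
    intro n
    calc ‖P.coeff n‖ = ‖P n fun _ => (1:ℂ)‖ := rfl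
      _ ≤ ‖P n‖ * ∏ _i : Fin n, ‖(1:ℂ)‖ := (P n).le_opNorm _
      _ = ‖P n‖ := by simp
  -- the primitive of q
  set g : ℂ → ℂ := fun z => ∑' n : ℕ, (P.coeff n / (n+1)) * (z - z0) ^ (n+1) with hg
  have hg0 : g z0 = 0 := by
    rw [hg]; simp
  have hs2 : (0:ℝ) < 9*s/16 := by linarith
  have hqsum : ∀ y ∈ Metric.ball z0 (9*s/16), HasSum (fun n : ℕ => P.coeff n * (y - z0) ^ n) (q y) := by
    intro y hy
    have hmem : y - z0 ∈ Metric.eball (0:ℂ) ((3*s/4).toNNReal : ℝ≥0∞) := by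
      rw [mem_eball_zero_iff, enorm_eq_nnnorm]
      rw [show ((3*s/4).toNNReal : ℝ≥0∞) = ((3*s/4).toNNReal : ℝ≥0) from rfl, ENNReal.coe_lt_coe,
        ← NNReal.coe_lt_coe, coe_nnnorm, hcoe34]
      have := Metric.mem_ball.mp hy
      rw [dist_eq_norm] at this
      linarith
    have := hps.hasSum hmem
    simp only [FormalMultilinearSeries.apply_eq_pow_smul_coeff, smul_eq_mul] at this
    have h2 : z0 + (y - z0) = y := by ring
    rw [h2] at this
    exact this.congr_fun fun n => by ring
  have hgderiv : ∀ y ∈ Metric.ball z0 (9*s/16), HasDerivAt g (q y) y := by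
    have hterm : ∀ (n : ℕ) (y : ℂ), y ∈ Metric.ball z0 (9*s/16) →
        HasDerivAt (fun z => P.coeff n / ((n:ℂ)+1) * (z - z0) ^ (n+1))
          (P.coeff n * (y - z0) ^ n) y := by
      intro n y _
      have h1 : HasDerivAt (fun z : ℂ => (z - z0) ^ (n+1)) (((n:ℂ)+1) * (y - z0) ^ n) y := by
        have := ((hasDerivAt_id y).sub_const z0).fun_pow (n+1)
        simpa using this
      have h2 := h1.const_mul (P.coeff n / ((n:ℂ)+1))
      refine h2.congr_deriv ?_
      have hne1 : ((n:ℂ)+1) ≠ 0 := Nat.cast_add_one_ne_zero n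
      field_simp
    have hbound : ∀ (n : ℕ) (y : ℂ), y ∈ Metric.ball z0 (9*s/16) →
        ‖P.coeff n * (y - z0) ^ n‖ ≤ C * (9/10) ^ n := by
      intro n y hy
      have hyb : ‖y - z0‖ ≤ 9*s/16 := by
        have := Metric.mem_ball.mp hy
        rw [dist_eq_norm] at this
        linarith
      have hkey : (9:ℝ)*s/16 = (5*s/8) * (9/10) := by ring
      calc ‖P.coeff n * (y - z0) ^ n‖ = ‖P.coeff n‖ * ‖y - z0‖ ^ n := by
            rw [norm_mul, norm_pow]
        _ ≤ ‖P n‖ * (9*s/16) ^ n := by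
            apply mul_le_mul (hcoeff n) (pow_le_pow_left₀ (norm_nonneg _) hyb n) (by positivity)
              (norm_nonneg _)
        _ = (‖P n‖ * (5*s/8) ^ n) * (9/10) ^ n := by
            rw [hkey, mul_pow, ← mul_assoc]
        _ ≤ C * (9/10) ^ n := by
            apply mul_le_mul_of_nonneg_right (hCb' n) (by positivity)
    have hsum0 : Summable (fun n : ℕ => P.coeff n / ((n:ℂ)+1) * (z0 - z0) ^ (n+1)) := by
      simp [sub_self]
    intro y hy
    have key : HasDerivAt g (∑' n : ℕ, P.coeff n * (y - z0) ^ n) y :=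
      hasDerivAt_tsum_of_isPreconnected
        (Summable.mul_left C (summable_geometric_of_lt_one (by norm_num) (by norm_num)))
        Metric.isOpen_ball (convex_ball z0 (9*s/16)).isPreconnected
        hterm hbound (Metric.mem_ball_self hs2) hsum0 hy
    have := (hqsum y hy).tsum_eq
    rwa [this] at key
  have hball2 : Metric.ball z0 (9*s/16) ⊆ Metric.ball z0 s := Metric.ball_subset_ball (by linarith)
  -- f z = f z0 * exp (g z) on the small ball
  have hconst : ∀ z ∈ Metric.ball z0 (9*s/16), f z = f z0 * Complex.exp (g z) := by
    have hF : ∀ y ∈ Metric.ball z0 (9*s/16),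
        HasDerivAt (fun z => f z * Complex.exp (-g z)) 0 y := by
      intro y hy
      have hfy : HasDerivAt f (deriv f y) y := (hf y).hasDerivAt
      have hexp : HasDerivAt (fun z => Complex.exp (-g z))
          (Complex.exp (-g y) * (-q y)) y := ((hgderiv y hy).neg).cexp
      have hmul := hfy.fun_mul hexp
      refine hmul.congr_deriv ?_
      have hfy0 : f y ≠ 0 := hne y (hball2 hy)
      rw [hq]
      field_simp
      ring
    have hdF : DifferentiableOn ℂ (fun z => f z * Complex.exp (-g z))
        (Metric.ball z0 (9*s/16)) :=
      fun y hy => ((hF y hy).differentiableAt).differentiableWithinAt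
    have hzero : ∀ x ∈ Metric.ball z0 (9*s/16),
        fderivWithin ℂ (fun z => f z * Complex.exp (-g z)) (Metric.ball z0 (9*s/16)) x = 0 := by
      intro x hx
      have h1 := (hasDerivAt_iff_hasFDerivAt.mp (hF x hx)).hasFDerivWithinAt.fderivWithin
        (Metric.isOpen_ball.uniqueDiffWithinAt hx)
      rw [h1]
      ext v
      simp
    intro z hz
    have hcc := (convex_ball z0 (9*s/16)).is_const_of_fderivWithin_eq_zero hdF hzero
      hz (Metric.mem_ball_self hs2)
    rw [hg0] at hcc
    simp only [neg_zero, Complex.exp_zero, mul_one] at hcc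
    have h5 : f z * Complex.exp (-g z) * Complex.exp (g z) = f z0 * Complex.exp (g z) := by
      rw [hcc]
    rwa [mul_assoc, ← Complex.exp_add, neg_add_cancel, Complex.exp_zero, mul_one] at h5
  -- logs
  set a : ℝ := Real.log (‖f z0‖) with haa
  have ha : 0 < a := Real.log_pos (hpos z0 (Metric.mem_ball_self hs))
  set W : ℂ → ℂ := fun z => (a : ℂ) + g z with hW
  have hrew : ∀ z ∈ Metric.ball z0 (9*s/16), (W z).re = Real.log (‖f z‖) := by
    intro z hz
    have h1 := hconst z hz
    have h2 : ‖f z‖ = ‖f z0‖ * Real.exp ((g z).re) := by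
      rw [h1, norm_mul, Complex.norm_exp]
    rw [hW]
    simp only [Complex.add_re, Complex.ofReal_re]
    have h3 : (0:ℝ) < ‖f z0‖ :=
      lt_trans zero_lt_one (hpos z0 (Metric.mem_ball_self hs))
    rw [h2, Real.log_mul h3.ne' (Real.exp_ne_zero _), Real.log_exp, haa]
  have hxpos : ∀ z ∈ Metric.ball z0 (9*s/16), 0 < (W z).re := by
    intro z hz
    rw [hrew z hz]
    exact Real.log_pos (hpos z (hball2 hz))
  set φ : ℂ → ℂ := fun z => (W z - a) / (W z + a) with hφ
  have hden : ∀ z ∈ Metric.ball z0 (9*s/16), W z + a ≠ 0 := by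
    intro z hz h0
    have := congrArg Complex.re h0
    simp only [Complex.add_re, Complex.ofReal_re, Complex.zero_re] at this
    have := hxpos z hz
    linarith
  have hφdiff : DifferentiableOn ℂ φ (Metric.ball z0 (9*s/16)) := by
    have hwd : DifferentiableOn ℂ W (Metric.ball z0 (9*s/16)) :=
      fun y hy => (((hgderiv y hy).differentiableAt).const_add _).differentiableWithinAt
    exact (hwd.sub_const _).div (hwd.add_const _) hden
  have hφ0 : φ z0 = 0 := by
    rw [hφ]
    simp [hW, hg0]
  have hmaps : Set.MapsTo φ (Metric.ball z0 (9*s/16)) (Metric.ball (0:ℂ) 1) := by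
    intro z hz
    have h1 : ‖W z - a‖ < ‖W z + a‖ := by
      apply lt_of_pow_lt_pow_left₀ 2 (norm_nonneg _)
      rw [Complex.sq_norm, Complex.sq_norm, Complex.normSq_apply, Complex.normSq_apply]
      simp only [Complex.add_re, Complex.sub_re, Complex.ofReal_re, Complex.add_im,
        Complex.sub_im, Complex.ofReal_im, sub_zero, add_zero]
      nlinarith [hxpos z hz, ha]
    have h2 : (0:ℝ) < ‖W z + a‖ := norm_pos_iff.mpr (hden z hz)
    rw [Metric.mem_ball, dist_zero_right, hφ]
    simp only [norm_div]
    rw [div_lt_one h2]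
    exact h1
  -- Schwarz lemma
  intro z hzd
  have hzball : z ∈ Metric.ball z0 (9*s/16) := by
    rw [Metric.mem_ball]
    linarith
  have hmaps' : Set.MapsTo φ (Metric.ball z0 (9*s/16)) (Metric.ball (φ z0) 1) := by
    rwa [hφ0]
  have hsch := Complex.dist_le_div_mul_dist_of_mapsTo_ball hφdiff (hmaps'.mono_right Metric.ball_subset_closedBall) hzball
  have hsch2 : ‖φ z‖ ≤ 8/9 := by
    rw [dist_eq_norm, hφ0, sub_zero] at hsch
    calc ‖φ z‖ ≤ 1 / (9*s/16) * dist z z0 := hsch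
      _ ≤ 1 / (9*s/16) * (s/2) := by
          apply mul_le_mul_of_nonneg_left hzd (by positivity)
      _ = 8/9 := by field_simp; ring
  have h2 : (0:ℝ) < ‖W z + a‖ := norm_pos_iff.mpr (hden z hzball)
  have hkey : ‖W z - a‖ ≤ 8/9 * ‖W z + a‖ := by
    have : ‖φ z‖ = ‖W z - a‖ / ‖W z + a‖ := by
      rw [hφ]; simp [norm_div]
    rw [this, div_le_iff₀ h2] at hsch2
    linarith [hsch2]
  have hsq : ((W z).re - a)^2 + (W z).im^2 ≤ (8/9)^2 * (((W z).re + a)^2 + (W z).im^2) := by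
    have h3 := pow_le_pow_left₀ (norm_nonneg _) hkey 2
    rw [mul_pow, Complex.sq_norm, Complex.sq_norm, Complex.normSq_apply, Complex.normSq_apply] at h3
    have h4 : ((W z).re - a) * ((W z).re - a) + (W z).im * (W z).im ≤
        (8/9)^2 * (((W z).re + a) * ((W z).re + a) + (W z).im * (W z).im) := by
      simpa [Complex.add_re, Complex.sub_re, Complex.ofReal_re, Complex.add_im, Complex.sub_im,
        Complex.ofReal_im] using h3
    nlinarith [h4]
  have hxz := hxpos z hzball
  have hfinal : a ≤ 18 * (W z).re := by nlinarith [hsq, ha, hxz]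
  rw [← hrew z hzball]
  exact hfinal

lemma harnack_chain (f : ℂ → ℂ) (hf : Differentiable ℂ f) (r d ρ : ℝ)
    (hr : 0 < r) (hρ2 : 2*r < ρ) (h54 : 5*ρ/4 < d*r)
    (hann : ∀ ζ : ℂ, r < ‖ζ‖ → ‖ζ‖ < d*r → 1 < ‖f ζ‖)
    (zm w : ℂ) (hzm : ‖zm‖ = ρ) (hw : ‖w‖ = ρ) :
    Real.log (‖f zm‖) ≤ 18^128 * Real.log (‖f w‖) := by
  have hρ0 : 0 < ρ := by linarith
  set β := Complex.arg zm with hβ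
  set α := Complex.arg w with hα
  set δ : ℝ := (α - β) / 128 with hδ
  set p : ℕ → ℂ := fun j => (ρ:ℂ) * Complex.exp (((β + j * δ : ℝ) : ℂ) * Complex.I) with hp
  have habs : ∀ j, ‖p j‖ = ρ := by
    intro j
    show ‖(ρ:ℂ) * Complex.exp (((β + j * δ : ℝ) : ℂ) * Complex.I)‖ = ρ
    rw [norm_mul, Complex.norm_real, Real.norm_eq_abs, abs_of_pos hρ0, Complex.norm_exp_ofReal_mul_I, mul_one]
  have hp0 : p 0 = zm := by
    show (ρ:ℂ) * Complex.exp (((β + (0:ℕ) * δ : ℝ) : ℂ) * Complex.I) = zm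
    rw [show (β + (0:ℕ) * δ : ℝ) = β by push_cast; ring, ← hzm]
    exact Complex.norm_mul_exp_arg_mul_I zm
  have hp128 : p 128 = w := by
    show (ρ:ℂ) * Complex.exp (((β + (128:ℕ) * δ : ℝ) : ℂ) * Complex.I) = w
    rw [show (β + (128:ℕ) * δ : ℝ) = α by rw [hδ]; push_cast; ring, ← hw]
    exact Complex.norm_mul_exp_arg_mul_I w
  have hδle : |δ| ≤ 1/16 := by
    rw [hδ, abs_div]
    have h1 : |α - β| ≤ 2 * Real.pi := by
      have h2 := Complex.abs_arg_le_pi zm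
      have h3 := Complex.abs_arg_le_pi w
      have h4 := abs_add_le α (-β)
      rw [← sub_eq_add_neg, abs_neg] at h4
      rw [← hβ] at h2
      rw [← hα] at h3
      linarith
    have hpi := Real.pi_le_four
    have : |(128:ℝ)| = 128 := by norm_num
    rw [this]
    rw [div_le_div_iff₀ (by norm_num) (by norm_num)]
    linarith
  have hdist : ∀ j : ℕ, dist (p (j+1)) (p j) ≤ (ρ/4) / 2 := by
    intro j
    have hsplit : p (j+1) = p j * Complex.exp ((δ:ℂ) * Complex.I) := by
      rw [hp]
      simp only []
      rw [mul_assoc, ← Complex.exp_add]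
      congr 2
      push_cast
      ring
    rw [dist_eq_norm, hsplit]
    have : p j * Complex.exp ((δ:ℂ) * Complex.I) - p j
        = p j * (Complex.exp ((δ:ℂ) * Complex.I) - 1) := by ring
    rw [this]
    rw [norm_mul, habs j]
    have hδI : ‖(δ:ℂ) * Complex.I‖ ≤ 1 := by
      rw [norm_mul, Complex.norm_I, mul_one, Complex.norm_real, Real.norm_eq_abs]
      linarith [hδle]
    have h5 := Complex.norm_exp_sub_one_le hδI
    rw [norm_mul, Complex.norm_I, mul_one, Complex.norm_real, Real.norm_eq_abs] at h5
    calc ρ * ‖Complex.exp ((δ:ℂ) * Complex.I) - 1‖ ≤ ρ * (2 * |δ|) := by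
          apply mul_le_mul_of_nonneg_left h5 hρ0.le
      _ ≤ ρ/4/2 := by nlinarith [hδle, hρ0]
  have hpos : ∀ j : ℕ, ∀ ζ ∈ Metric.ball (p j) (ρ/4), 1 < ‖f ζ‖ := by
    intro j ζ hζ
    have hd : dist ζ (p j) < ρ/4 := Metric.mem_ball.mp hζ
    rw [dist_eq_norm] at hd
    have habsj : ‖p j‖ = ρ := by rw [habs j]
    have h7 : ρ - ‖ζ‖ ≤ ‖ζ - p j‖ := by
      rw [norm_sub_rev]
      simpa [habsj] using norm_sub_norm_le (p j) ζ
    have h8 : ‖ζ‖ - ρ ≤ ‖ζ - p j‖ := by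
      simpa [habsj] using norm_sub_norm_le ζ (p j)
    apply hann
    · linarith
    · linarith
  have hstep : ∀ j : ℕ, Real.log (‖f (p j)‖) ≤ 18 * Real.log (‖f (p (j+1))‖) := by
    intro j
    exact harnack_step f hf (p j) (ρ/4) (by linarith) (hpos j) (p (j+1)) (hdist j)
  have hiter : ∀ j : ℕ, Real.log (‖f (p 0)‖) ≤ 18^j * Real.log (‖f (p j)‖) := by
    intro j
    induction j with
    | zero => simp
    | succ j ih =>
      calc Real.log (‖f (p 0)‖) ≤ 18^j * Real.log (‖f (p j)‖) := ih
        _ ≤ 18^j * (18 * Real.log (‖f (p (j+1))‖)) := by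
            apply mul_le_mul_of_nonneg_left (hstep j) (by positivity)
        _ = 18^(j+1) * Real.log (‖f (p (j+1))‖) := by ring
  have := hiter 128
  rwa [hp0, hp128] at this

set_option maxHeartbeats 1000000 in
theorem minMod_small_of_uniformlySlowlyEscaping_nonempty (f : ℂ → ℂ)
    (hf : Differentiable ℂ f)
    (htrans : ¬∃ p : Polynomial ℂ, ∀ z, f z = Polynomial.eval z p)
    (hne : (uniformlySlowlyEscaping f).Nonempty) :
    ∃ c r₀ d : ℝ, 0 < c ∧ 0 < r₀ ∧ 1 < d ∧
      ∀ r, r₀ ≤ r → ∃ ρ, r < ρ ∧ ρ < d * r ∧ minMod f ρ ≤ c := by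
  obtain ⟨z, N, R, C₁, C₂, hR, hC₁, hC12, horb⟩ := hne
  have hC₂ : 0 < C₂ := lt_trans hC₁ hC12
  set D : ℝ := C₂ * R / C₁ with hD
  have hD1 : 1 < D := by
    rw [hD, lt_div_iff₀ hC₁]
    nlinarith
  set k : ℕ := 3 * 18^128 with hk
  obtain ⟨Rk, hRk1, hgrow⟩ := growth_lemma f hf htrans k
  refine ⟨1, 1 + C₂ * R^N + D + Rk, 3*D, one_pos, by positivity, by nlinarith, ?_⟩
  intro r hr
  by_contra hcon
  push_neg at hcon
  have hr0 : 0 < r := by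
    have : (0:ℝ) < 1 + C₂ * R^N + D + Rk := by positivity
    linarith
  have hann : ∀ ζ : ℂ, r < ‖ζ‖ → ‖ζ‖ < (3*D)*r → 1 < ‖f ζ‖ := by
    intro ζ h1 h2
    exact lt_of_lt_of_le (hcon _ h1 h2) (minMod_le' f ζ)
  -- the orbit
  set rs : ℕ → ℝ := fun n => ‖f^[n] z‖ with hrs
  have hex : ∃ m, 2*r < rs (N + m) := by
    have htend : Tendsto (fun n : ℕ => C₁ * R^n) atTop atTop :=
      Tendsto.const_mul_atTop hC₁ (tendsto_pow_atTop_atTop_of_one_lt hR)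
    obtain ⟨n₁, hn₁⟩ := (htend.eventually_gt_atTop (2*r)).exists_forall_of_atTop
    exact ⟨n₁, lt_of_lt_of_le (hn₁ (N + n₁) (Nat.le_add_left _ _)) (horb (N + n₁) (Nat.le_add_right _ _)).1⟩
  set m0 := Nat.find hex with hm0def
  have hm0 : 2*r < rs (N + m0) := Nat.find_spec hex
  have hm0pos : m0 ≠ 0 := by
    intro h0
    rw [h0, Nat.add_zero] at hm0
    have h1 : rs N ≤ C₂ * R^N := (horb N le_rfl).2
    have h2 : C₂ * R^N ≤ r := by
      have : (0:ℝ) ≤ 1 + D + Rk := by positivity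
      linarith
    linarith
  set n := N + (m0 - 1) with hn
  have hn1 : n + 1 = N + m0 := by omega
  have hprev : rs n ≤ 2*r := by
    have := Nat.find_min hex (show m0 - 1 < m0 by omega)
    linarith [not_lt.mp this]
  have hnN : N ≤ n := Nat.le_add_right _ _
  set ρ := rs (n+1) with hρdef
  have hρ2r : 2*r < ρ := by rw [hρdef, hn1]; exact hm0
  have hρup : ρ ≤ D * (2*r) := by
    have h1 : rs (n+1) ≤ C₂ * R^(n+1) := (horb (n+1) (by omega)).2
    have h2 : C₁ * R^n ≤ rs n := (horb n hnN).1
    have h3 : C₂ * R^(n+1) = D * (C₁ * R^n) := by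
      rw [hD]
      field_simp
      ring
    have h4 : D * (C₁ * R^n) ≤ D * rs n := by
      apply mul_le_mul_of_nonneg_left h2 (by positivity)
    have h5 : D * rs n ≤ D * (2*r) := by
      apply mul_le_mul_of_nonneg_left hprev (by positivity)
    calc ρ = rs (n+1) := hρdef
      _ ≤ C₂ * R^(n+1) := h1
      _ = D * (C₁ * R^n) := h3
      _ ≤ D * rs n := h4
      _ ≤ D * (2*r) := h5
  have h54 : 5*ρ/4 < (3*D)*r := by nlinarith
  set w : ℂ := f^[n+1] z with hw
  have hwab : ‖w‖ = ρ := rfl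
  have hρRk : Rk ≤ ρ := by
    have : Rk ≤ r := by
      have : (0:ℝ) ≤ 1 + C₂ * R^N + D := by positivity
      linarith
    linarith
  obtain ⟨w1, hw1a, hw1b⟩ := hgrow ρ hρRk
  have hchain := harnack_chain f hf r (3*D) ρ hr0 hρ2r h54 hann w1 w hw1a hwab
  have hρ1 : 1 < ρ := by
    have : (1:ℝ) ≤ r := by
      have : (0:ℝ) ≤ C₂ * R^N + D + Rk := by positivity
      linarith
    linarith
  have hρ0 : (0:ℝ) < ρ := by linarith
  have hlogw1 : (k:ℝ) * Real.log ρ ≤ Real.log (‖f w1‖) := by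
    rw [← Real.log_pow]
    apply Real.log_le_log (by positivity) hw1b
  -- |f w| ≤ D * ρ
  have hfw : ‖f w‖ ≤ D * ρ := by
    have h1 : ‖f w‖ = rs (n+2) := by
      rw [hw, hrs]
      congr 1
      rw [← Function.iterate_succ_apply' f (n+1) z]
    have h2 : rs (n+2) ≤ C₂ * R^(n+2) := (horb (n+2) (by omega)).2
    have h3 : C₂ * R^(n+2) = D * (C₁ * R^(n+1)) := by
      rw [hD]; field_simp; ring
    have h4 : C₁ * R^(n+1) ≤ ρ := (horb (n+1) (by omega)).1
    rw [h1]
    calc rs (n+2) ≤ C₂ * R^(n+2) := h2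
      _ = D * (C₁ * R^(n+1)) := h3
      _ ≤ D * ρ := by apply mul_le_mul_of_nonneg_left h4 (by positivity)
  have hfwpos : 1 < ‖f w‖ := by
    apply hann w (by linarith) (by nlinarith)
  -- combine
  have hcomb : 3 * Real.log ρ ≤ Real.log (‖f w‖) := by
    have h1 : (k:ℝ) * Real.log ρ ≤ 18^128 * Real.log (‖f w‖) :=
      le_trans hlogw1 hchain
    have hk' : (k:ℝ) = 3 * 18^128 := by rw [hk]; push_cast; ring
    rw [hk'] at h1
    nlinarith [h1]
  have hup2 : Real.log (‖f w‖) ≤ Real.log D + Real.log ρ := by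
    rw [← Real.log_mul (by positivity) (by positivity)]
    apply Real.log_le_log (by linarith) hfw
  have hlogρ : 0 < Real.log ρ := Real.log_pos hρ1
  have hfin : ρ^2 ≤ D := by
    have h1 : 2 * Real.log ρ ≤ Real.log D := by linarith
    have h2 : Real.log (ρ^2) ≤ Real.log D := by
      rw [Real.log_pow]; push_cast; linarith
    exact (Real.log_le_log_iff (by positivity) (by linarith)).mp h2
  have : 2*D < ρ := by
    have hDr : D ≤ r := by
      have : (0:ℝ) ≤ 1 + C₂ * R^N + Rk := by positivity
      linarith
    linarith
  nlinarith [hfin, hD1]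
end

section
/- Let λ ∈ ℂ \ {0} and f_λ(z) = λe^z. Fix q > 0 large. For every ε > 0 and all integers 0 ≤ k ≤ l, the set D_ε^{k,l} = {z ∈ I(f_λ) : Re(f_λⁿ(z)) > q for all n ≥ k, and |Im(f_λⁿ(z))| ≤ |f_λⁿ(z)|/(log |f_λⁿ(z)|)^ε for all n ≥ l} is contained in the fast escaping set A(f_λ). -/
open Filter Topology Metric MeasureTheory

/-- The maximum modulus `M(r, f) = max_{|z| = r} |f(z)|`. -/
noncomputable def maxMod (f : ℂ → ℂ) (r : ℝ) : ℝ :=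
  sSup ((fun z => ‖f z‖) '' Metric.sphere (0 : ℂ) r)

/-- The escaping set `I(f)`. -/
def escapingSet (f : ℂ → ℂ) : Set ℂ :=
  {z | Tendsto (fun n => ‖f^[n] z‖) atTop atTop}

/-- The fast escaping set `A(f)`. -/
def fastEscapingSet (f : ℂ → ℂ) : Set ℂ :=
  {z | ∃ R : ℝ, 0 < R ∧ Tendsto (fun n => (maxMod f)^[n] R) atTop atTop ∧
    ∃ l : ℕ, ∀ n : ℕ, (maxMod f)^[n] R ≤ ‖f^[n + l] z‖}

lemma maxMod_expFam (lam : ℂ) (r : ℝ) (hr : 0 ≤ r) :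
    maxMod (expFam lam) r = ‖lam‖ * Real.exp r := by
  apply IsGreatest.csSup_eq
  constructor
  · refine ⟨(r : ℂ), ?_, ?_⟩
    · simp [abs_of_nonneg hr]
    · simp [expFam, map_mul, Complex.norm_exp]
  · rintro x ⟨w, hw, rfl⟩
    have hwr : ‖w‖ = r := by
      simpa [Complex.dist_eq] using hw
    have hre : w.re ≤ r := hwr ▸ (le_trans (le_abs_self _) (Complex.abs_re_le_norm w))
    simp only [expFam, norm_mul, Complex.norm_exp]
    exact mul_le_mul_of_nonneg_left (Real.exp_le_exp.mpr hre) (norm_nonneg lam)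

set_option maxHeartbeats 1000000 in
theorem karpinska_urbanski_sets_subset_fastEscaping (lam : ℂ) (hlam : lam ≠ 0) :
    ∃ q₀ : ℝ, 0 < q₀ ∧ ∀ q : ℝ, q₀ ≤ q → ∀ ε : ℝ, 0 < ε → ∀ k l : ℕ, k ≤ l →
      {z : ℂ | z ∈ escapingSet (expFam lam) ∧
        (∀ n, k ≤ n → q < ((expFam lam)^[n] z).re) ∧
        (∀ n, l ≤ n → |((expFam lam)^[n] z).im| ≤
          ‖(expFam lam)^[n] z‖ /
            (Real.log (‖(expFam lam)^[n] z‖)) ^ ε)} ⊆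
      fastEscapingSet (expFam lam) := by
  refine ⟨1, one_pos, ?_⟩
  intro q hq ε hε k l hkl z ⟨hz, hre, him⟩
  set f := expFam lam with hf
  clear_value f
  set A := ‖lam‖ with hAdef
  clear_value A
  have hA : 0 < A := by
    simpa [hAdef] using (norm_pos_iff.mpr hlam)
  set R : ℝ := max 1 (8 / A) with hRdef
  have hR1 : (1:ℝ) ≤ R := le_max_left _ _
  have hR8 : 8 / A ≤ R := le_max_right _ _
  clear_value R
  set T : ℝ := max 4 (Real.exp ((4:ℝ) ^ (1/ε))) with hTdef
  have hT4 : (4:ℝ) ≤ T := le_max_left _ _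
  have hTe : Real.exp ((4:ℝ) ^ (1/ε)) ≤ T := le_max_right _ _
  clear_value T
  set B : ℝ := max T (2 * R) with hBdef
  have hTB : T ≤ B := le_max_left _ _
  have hRB : 2 * R ≤ B := le_max_right _ _
  clear_value B
  -- choose L₀ threshold
  obtain ⟨L₀, hL₀⟩ := Filter.eventually_atTop.mp (hz.eventually_ge_atTop B)
  set L : ℕ := max l L₀ with hLdef
  have hlL : l ≤ L := le_max_left _ _
  have hL₀L : L₀ ≤ L := le_max_right _ _
  clear_value L
  -- abs of iterates beyond L is at least B
  have htB : ∀ n : ℕ, B ≤ ‖f^[n + L] z‖ := fun n =>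
    hL₀ (n + L) (le_trans hL₀L (Nat.le_add_left L n))
  -- iterate formula
  have hstep : ∀ w : ℂ, ‖f w‖ = A * Real.exp w.re := by
    intro w
    simp [hf, expFam, map_mul, Complex.norm_exp, hAdef]
  -- real part lower bound
  have hre34 : ∀ n : ℕ, 3/4 * ‖f^[n + L] z‖ ≤ (f^[n + L] z).re := by
    intro n
    set w := f^[n + L] z with hw
    set t := ‖w‖ with ht
    have htB' : B ≤ t := htB n
    have ht4 : (4:ℝ) ≤ t := le_trans (le_trans hT4 hTB) htB'
    have hte : Real.exp ((4:ℝ) ^ (1/ε)) ≤ t :=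
      le_trans (le_trans hTe hTB) htB'
    have hlogt : (4:ℝ) ^ (1/ε) ≤ Real.log t := by
      calc (4:ℝ) ^ (1/ε) = Real.log (Real.exp ((4:ℝ) ^ (1/ε))) := (Real.log_exp _).symm
        _ ≤ Real.log t := Real.log_le_log (Real.exp_pos _) hte
    have hlog4 : (4:ℝ) ≤ (Real.log t) ^ ε := by
      have h1 : ((4:ℝ) ^ (1/ε)) ^ ε ≤ (Real.log t) ^ ε :=
        Real.rpow_le_rpow (Real.rpow_nonneg (by norm_num) _) hlogt hε.le
      rwa [← Real.rpow_mul (by norm_num : (0:ℝ) ≤ 4), one_div,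
        inv_mul_cancel₀ hε.ne', Real.rpow_one] at h1
    have him' : |w.im| ≤ t / (Real.log t) ^ ε := him (n + L)
      (le_trans hlL (Nat.le_add_left L n))
    have him4 : |w.im| ≤ t / 4 := by
      refine le_trans him' ?_
      apply div_le_div_of_nonneg_left (by linarith : (0:ℝ) ≤ t) (by norm_num) hlog4
    have hre0 : 0 ≤ w.re := by
      have := hre (n + L) (le_trans hkl (le_trans hlL (Nat.le_add_left L n)))
      linarith
    have hsq : t ^ 2 = w.re ^ 2 + w.im ^ 2 := by
      rw [ht, Complex.sq_norm, Complex.normSq_apply]; ring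
    have him2 : w.im ^ 2 ≤ t ^ 2 / 16 := by
      have h1 : w.im ^ 2 = |w.im| ^ 2 := (sq_abs _).symm
      nlinarith [abs_nonneg w.im]
    nlinarith [sq_nonneg (w.re + 3/4 * t)]
  -- key induction
  have key : ∀ n : ℕ, R + n ≤ (maxMod f)^[n] R ∧
      (maxMod f)^[n] R ≤ ‖f^[n + L] z‖ / 2 := by
    intro n
    induction n with
    | zero =>
      refine ⟨by simp, ?_⟩
      have := htB 0
      simp only [Function.iterate_zero, id_eq]
      linarith
    | succ n ih =>
      obtain ⟨ih1, ih2⟩ := ih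
      set m := (maxMod f)^[n] R with hm
      clear_value m
      have hm0 : (0:ℝ) ≤ m := by
        have : (0:ℝ) ≤ R + n := by positivity
        linarith
      have hmR : R ≤ m := by
        have : (0:ℝ) ≤ (n:ℝ) := Nat.cast_nonneg n
        linarith
      have hMeq : (maxMod f)^[n+1] R = A * Real.exp m := by
        rw [Function.iterate_succ_apply', ← hm, hf, maxMod_expFam lam m hm0, hAdef]
      set t := ‖f^[n + L] z‖ with ht
      have htB' : B ≤ t := htB n
      have ht4 : (4:ℝ) ≤ t := le_trans (le_trans hT4 hTB) htB'
      have hre' : 3/4 * t ≤ (f^[n + L] z).re := hre34 n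
      have htsucc : ‖f^[n + 1 + L] z‖ = A * Real.exp ((f^[n + L] z).re) := by
        have : n + 1 + L = (n + L) + 1 := by ring
        rw [this, Function.iterate_succ_apply', hstep]
      constructor
      · -- lower bound
        rw [hMeq]
        have hquad : m ^ 2 / 4 ≤ Real.exp m := by
          have h1 : m / 2 + 1 ≤ Real.exp (m / 2) := Real.add_one_le_exp (m / 2)
          have h2 : Real.exp m = Real.exp (m / 2) * Real.exp (m / 2) := by
            rw [← Real.exp_add]; ring_nf
          nlinarith
        have h8 : 8 ≤ A * m := by
          have : 8 / A ≤ m := le_trans hR8 hmR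
          rw [div_le_iff₀ hA] at this
          linarith [mul_comm m A]
        have : 2 * m ≤ A * Real.exp m := by
          nlinarith
        push_cast
        linarith
      · -- upper bound
        rw [hMeq, htsucc]
        have hm2 : m ≤ t / 2 := ih2
        have hdiff : 1 ≤ (f^[n + L] z).re - m := by linarith
        have h2e : 2 ≤ Real.exp ((f^[n + L] z).re - m) := by
          have := Real.add_one_le_exp ((f^[n + L] z).re - m)
          linarith
        have hsplit : Real.exp ((f^[n + L] z).re) =
            Real.exp m * Real.exp ((f^[n + L] z).re - m) := by
          rw [← Real.exp_add]; ring_nf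
        rw [hsplit]
        have hep := Real.exp_pos m
        calc A * Real.exp m = A * (2 * Real.exp m) / 2 := by ring
          _ ≤ A * (Real.exp m * Real.exp ((f^[n + L] z).re - m)) / 2 := by
              have h : 2 * Real.exp m ≤ Real.exp m * Real.exp ((f^[n + L] z).re - m) := by
                nlinarith
              have h2 := mul_le_mul_of_nonneg_left h hA.le
              linarith
  refine ⟨R, lt_of_lt_of_le one_pos hR1, ?_, L, ?_⟩
  · apply tendsto_atTop_mono (fun n => (key n).1)
    exact tendsto_atTop_add_const_left _ R tendsto_natCast_atTop_atTop
  · intro n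
    have h1 := (key n).2
    have h2 : (0:ℝ) ≤ ‖f^[n + L] z‖ := norm_nonneg _
    linarith
end

section
/- Suppose (t_n)_{n ≥ 0} is a sequence of positive integers such that t_n / (∑_{k=1}^{n-1} t_k) → 0 as n → ∞. Then log t_n = o(n) as n → ∞. -/
open Filter Topology

theorem log_isLittleO_of_slowlyGrowing (t : ℕ → ℕ) (hpos : ∀ n, 0 < t n)
    (hslow : Tendsto (fun n => (t n : ℝ) / ∑ k ∈ Finset.Ico 1 n, (t k : ℝ))
      atTop (nhds 0)) :
    Tendsto (fun n => Real.log (t n) / (n : ℝ)) atTop (nhds 0) := by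
  have ht1 : ∀ n, (1:ℝ) ≤ (t n : ℝ) := fun n => by exact_mod_cast hpos n
  rw [Metric.tendsto_atTop]
  intro ε hε
  set δ := ε/2 with hδdef
  have hδ : 0 < δ := by positivity
  rw [Metric.tendsto_atTop] at hslow
  obtain ⟨N0, hN0⟩ := hslow δ hδ
  set N := max N0 2 with hNdef
  set S : ℕ → ℝ := fun n => ∑ k ∈ Finset.Ico 1 n, (t k : ℝ) with hSdef
  have hSpos : ∀ n, 2 ≤ n → 0 < S n := by
    intro n hn
    have h1 : (1:ℕ) ∈ Finset.Ico 1 n := by simp; omega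
    have h2 := Finset.single_le_sum (f := fun k => (t k : ℝ))
      (fun i _ => by positivity) h1
    have h3 := ht1 1
    simp only [hSdef]
    linarith
  have hkey : ∀ n, N ≤ n → (t n : ℝ) ≤ δ * S n := by
    intro n hn
    have h2 : 2 ≤ n := le_trans (le_max_right _ _) hn
    have hS := hSpos n h2
    have h := hN0 n (le_trans (le_max_left _ _) hn)
    rw [Real.dist_eq, sub_zero, abs_of_nonneg (by positivity)] at h
    rw [div_lt_iff₀ hS] at h
    linarith
  have hstep : ∀ n, N ≤ n → S (n+1) ≤ (1+δ) * S n := by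
    intro n hn
    have h2 : (2:ℕ) ≤ n := le_trans (le_max_right _ _) hn
    have h1 : 1 ≤ n := by omega
    have heq : S (n+1) = S n + (t n : ℝ) := Finset.sum_Ico_succ_top h1 _
    have hk := hkey n hn
    nlinarith [hSpos n h2]
  have hgrow : ∀ m, S (N + m) ≤ S N * (1+δ)^m := by
    intro m
    induction m with
    | zero => simp
    | succ m ih =>
      have hs := hstep (N+m) (Nat.le_add_right _ _)
      have hSNm := hSpos (N+m) (le_trans (le_max_right _ _) (Nat.le_add_right _ _))
      calc S (N + (m+1)) = S ((N+m)+1) := rfl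
        _ ≤ (1+δ) * S (N+m) := hs
        _ ≤ (1+δ) * (S N * (1+δ)^m) := by nlinarith
        _ = S N * (1+δ)^(m+1) := by ring
  have hSNpos : 0 < S N := hSpos N (le_max_right _ _)
  have hCpos : 0 < δ * S N := mul_pos hδ hSNpos
  set C := Real.log (δ * S N) with hCdef
  have hbound : ∀ n, N ≤ n → Real.log (t n) ≤ C + n * δ := by
    intro n hn
    obtain ⟨m, rfl⟩ := Nat.exists_eq_add_of_le hn
    have h1 : (t (N+m) : ℝ) ≤ δ * S N * (1+δ)^m := by
      have hk := hkey (N+m) (Nat.le_add_right _ _)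
      have hg := hgrow m
      nlinarith
    have htpos : (0:ℝ) < (t (N+m) : ℝ) := lt_of_lt_of_le one_pos (ht1 _)
    have h2 : Real.log (t (N+m)) ≤ Real.log (δ * S N * (1+δ)^m) :=
      Real.log_le_log htpos h1
    have h3 : Real.log (δ * S N * (1+δ)^m) = C + m * Real.log (1+δ) := by
      rw [Real.log_mul (ne_of_gt hCpos) (by positivity), Real.log_pow]
    have h4 : Real.log (1+δ) ≤ δ := by
      have := Real.log_le_sub_one_of_pos (x := 1+δ) (by linarith)
      linarith
    have h5 : (m:ℝ) * Real.log (1+δ) ≤ (↑(N+m)) * δ := by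
      have hlog0 : 0 ≤ Real.log (1+δ) := Real.log_nonneg (by linarith)
      have hm : (m:ℝ) ≤ (↑(N+m):ℝ) := by exact_mod_cast Nat.le_add_left m N
      nlinarith [Nat.cast_nonneg (α := ℝ) m]
    linarith [h2, h3 ▸ h2]
  obtain ⟨n1, hn1⟩ := exists_nat_gt (|C| / δ)
  refine ⟨max N (n1+1), fun n hn => ?_⟩
  have hnN : N ≤ n := le_trans (le_max_left _ _) hn
  have hn1' : n1 + 1 ≤ n := le_trans (le_max_right _ _) hn
  have hnpos : (0:ℝ) < n := by
    have : 1 ≤ n := by omega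
    exact_mod_cast Nat.lt_of_lt_of_le Nat.zero_lt_one this
  have hCn : |C| < n * δ := by
    have : |C| / δ < (n:ℝ) := lt_of_lt_of_le hn1 (by exact_mod_cast (by omega : n1 ≤ n))
    calc |C| = |C| / δ * δ := by field_simp
      _ < n * δ := by nlinarith
  have hlogpos : 0 ≤ Real.log (t n) := Real.log_nonneg (ht1 n)
  rw [Real.dist_eq, sub_zero, abs_of_nonneg (by positivity)]
  have hb := hbound n hnN
  have : Real.log (t n) < 2 * (n * δ) := by
    have : C ≤ |C| := le_abs_self C
    linarith
  calc Real.log (t n) / n < 2 * (n * δ) / n := by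
        exact div_lt_div_of_pos_right this hnpos
    _ = ε := by field_simp [hδdef]; linarith
end

section
/- Define the sequence (t_n) of positive integers by t_n = 2^{m²} for (m−1)³ ≤ n < m³, m ∈ ℕ. Then log t_n = o(n) as n → ∞, but it is NOT the case that t_n / (∑_{k=1}^{n-1} t_k) → 0 as n → ∞. -/
open Filter Topology

lemma exists_level (n : ℕ) : ∃ m : ℕ, 1 ≤ m ∧ (m - 1) ^ 3 ≤ n ∧ n < m ^ 3 := by
  have hP : ∃ m : ℕ, n < m ^ 3 := by
    refine ⟨n + 1, ?_⟩
    have : n + 1 ≤ (n + 1) ^ 3 := Nat.le_self_pow (by norm_num) _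
    omega
  set m := Nat.find hP with hm
  have hspec : n < m ^ 3 := Nat.find_spec hP
  have hm1 : 1 ≤ m := by
    rcases Nat.eq_zero_or_pos m with h | h
    · rw [h] at hspec; simp at hspec
    · exact h
  have hmin : ¬ n < (m - 1) ^ 3 := Nat.find_min hP (by omega)
  exact ⟨m, hm1, by omega, hspec⟩

lemma cube_le_two_four (j : ℕ) : j ^ 3 ≤ 2 * 4 ^ j := by
  induction j with
  | zero => norm_num
  | succ k ih =>
    rcases Nat.lt_or_ge k 2 with h | h
    · interval_cases k <;> norm_num
    · have h4 : (k + 1) ^ 3 ≤ 4 * k ^ 3 := by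
        have e1 : 2 * (k * k) ≤ k * (k * k) := Nat.mul_le_mul_right _ h
        have e2 : 2 * k ≤ k * k := Nat.mul_le_mul_right _ h
        zify at e1 e2 h ⊢
        nlinarith [e1, e2, h]
      calc (k + 1) ^ 3 ≤ 4 * k ^ 3 := h4
        _ ≤ 4 * (2 * 4 ^ k) := Nat.mul_le_mul_left _ ih
        _ = 2 * 4 ^ (k + 1) := by ring

lemma cube_pow_le (j : ℕ) : j ^ 3 * 2 ^ (j ^ 2) ≤ 2 ^ ((j + 1) ^ 2) := by
  calc j ^ 3 * 2 ^ (j ^ 2) ≤ (2 * 4 ^ j) * 2 ^ (j ^ 2) :=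
        Nat.mul_le_mul_right _ (cube_le_two_four j)
    _ = 2 ^ (1 + 2 * j + j ^ 2) := by
        rw [show (4 : ℕ) = 2 ^ 2 by norm_num, ← pow_mul, pow_add, pow_add, pow_one]
    _ = 2 ^ ((j + 1) ^ 2) := by ring_nf

theorem counterexample_littleO_not_slowlyGrowing (t : ℕ → ℕ)
    (ht : ∀ m : ℕ, 1 ≤ m → ∀ n : ℕ, (m - 1) ^ 3 ≤ n → n < m ^ 3 → t n = 2 ^ (m ^ 2)) :
    Tendsto (fun n => Real.log (t n) / (n : ℝ)) atTop (nhds 0) ∧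
      ¬ Tendsto (fun n => (t n : ℝ) / ∑ k ∈ Finset.Ico 1 n, (t k : ℝ))
        atTop (nhds 0) := by
  have hlog2 : 0 < Real.log 2 := Real.log_pos (by norm_num)
  constructor
  · rw [Metric.tendsto_atTop]
    intro ε hε
    obtain ⟨K, hK⟩ := exists_nat_gt (4 * Real.log 2 / ε)
    refine ⟨(K + 2) ^ 3, fun n hn => ?_⟩
    obtain ⟨m, hm1, hlo, hhi⟩ := exists_level n
    have htn := ht m hm1 n hlo hhi
    have hmK : K + 3 ≤ m := by
      by_contra hc
      push_neg at hc
      have : m ^ 3 ≤ (K + 2) ^ 3 := Nat.pow_le_pow_left (by omega) 3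
      omega
    set j := m - 1 with hj
    have hjm : m = j + 1 := by omega
    have hjK : K + 2 ≤ j := by omega
    have hn1 : 1 ≤ n := by
      have : 1 ≤ j ^ 3 := Nat.one_le_pow _ _ (by omega)
      omega
    have hnR : (0:ℝ) < n := by exact_mod_cast hn1
    have hjR : (0:ℝ) < j := by
      have : (1:ℕ) ≤ j := by omega
      exact_mod_cast this
    rw [Real.dist_eq, sub_zero, htn]
    have hcast : ((2 ^ (m ^ 2) : ℕ) : ℝ) = (2:ℝ) ^ (m ^ 2) := by push_cast; ring
    rw [hcast, Real.log_pow]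
    have hnonneg : (0:ℝ) ≤ (m ^ 2 : ℕ) * Real.log 2 / n := by positivity
    rw [abs_of_nonneg hnonneg]
    have hA : ((m ^ 2 : ℕ) : ℝ) * Real.log 2 / n ≤ 4 * Real.log 2 / j := by
      rw [div_le_div_iff₀ hnR hjR]
      have h1 : m ^ 2 * j ≤ 4 * j ^ 3 := by
        have hj1 : 1 ≤ j := by omega
        have e1 : 1 * j ≤ j * j := Nat.mul_le_mul_right _ hj1
        have h2 : m ^ 2 ≤ 4 * j ^ 2 := by nlinarith [hjm, e1]
        calc m ^ 2 * j ≤ 4 * j ^ 2 * j := Nat.mul_le_mul_right _ h2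
          _ = 4 * j ^ 3 := by ring
      have h2 : j ^ 3 ≤ n := hlo
      have h1R : ((m ^ 2 : ℕ) : ℝ) * j ≤ 4 * (j:ℝ) ^ 3 := by exact_mod_cast h1
      have h2R : ((j:ℝ)) ^ 3 ≤ n := by exact_mod_cast h2
      nlinarith [hlog2.le]
    have hB : 4 * Real.log 2 / (j:ℝ) < ε := by
      rw [div_lt_iff₀ hjR]
      have hKε : 4 * Real.log 2 < K * ε := by
        have := (div_lt_iff₀ hε).mp hK
        linarith
      have hKj : (K:ℝ) ≤ j := by exact_mod_cast (by omega : K ≤ j)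
      nlinarith
    exact lt_of_le_of_lt hA hB
  · intro h
    rw [Metric.tendsto_atTop] at h
    obtain ⟨N, hN⟩ := h 1 one_pos
    set m := N + 3 with hm
    set n := (N + 2) ^ 3 with hn
    have hnge : N ≤ n := by
      have : N + 2 ≤ (N + 2) ^ 3 := Nat.le_self_pow (by norm_num) _
      omega
    specialize hN n hnge
    have hmn : (m - 1) ^ 3 = n := by simp [hm, hn]
    have hnm3 : n < m ^ 3 := by
      have : (N + 2) ^ 3 < (N + 3) ^ 3 := Nat.pow_lt_pow_left (by omega) (by norm_num)
      simpa [hm, hn] using this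
    have htn : t n = 2 ^ (m ^ 2) := ht m (by omega) n (le_of_eq hmn) hnm3
    have hk : ∀ k ∈ Finset.Ico 1 n, t k ≤ 2 ^ ((m - 1) ^ 2) := by
      intro k hkmem
      obtain ⟨m', h1, h2, h3⟩ := exists_level k
      rw [ht m' h1 k h2 h3]
      have hk' : k < n := (Finset.mem_Ico.mp hkmem).2
      have hlt : (m' - 1) ^ 3 < (m - 1) ^ 3 := lt_of_le_of_lt h2 (hmn ▸ hk')
      have hm' : m' - 1 < m - 1 := by
        by_contra hc
        push_neg at hc
        exact absurd (Nat.pow_le_pow_left hc 3) (not_le.mpr hlt)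
      exact Nat.pow_le_pow_right (by norm_num) (Nat.pow_le_pow_left (by omega) 2)
    have hsum : ∑ k ∈ Finset.Ico 1 n, t k ≤ (m - 1) ^ 3 * 2 ^ ((m - 1) ^ 2) := by
      calc ∑ k ∈ Finset.Ico 1 n, t k
          ≤ (Finset.Ico 1 n).card * 2 ^ ((m - 1) ^ 2) := by
            rw [← smul_eq_mul]
            exact Finset.sum_le_card_nsmul _ _ _ hk
        _ ≤ (m - 1) ^ 3 * 2 ^ ((m - 1) ^ 2) := by
            apply Nat.mul_le_mul_right
            rw [Nat.card_Ico]
            omega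
    have hkey : (m - 1) ^ 3 * 2 ^ ((m - 1) ^ 2) ≤ 2 ^ (m ^ 2) := by
      have := cube_pow_le (m - 1)
      have hmm : m - 1 + 1 = m := by omega
      rwa [hmm] at this
    have hStn : ∑ k ∈ Finset.Ico 1 n, t k ≤ t n := by
      rw [htn]; exact hsum.trans hkey
    have hSpos : 0 < ∑ k ∈ Finset.Ico 1 n, t k := by
      apply Finset.sum_pos
      · intro k hkmem
        obtain ⟨m', h1, h2, h3⟩ := exists_level k
        rw [ht m' h1 k h2 h3]
        positivity
      · refine ⟨1, Finset.mem_Ico.mpr ⟨le_refl _, ?_⟩⟩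
        have : 8 ≤ (N + 2) ^ 3 := by
            have := Nat.pow_le_pow_left (show 2 ≤ N + 2 by omega) 3
            simpa using this
        omega
    have hScast : ∑ k ∈ Finset.Ico 1 n, ((t k : ℝ)) = ((∑ k ∈ Finset.Ico 1 n, t k : ℕ) : ℝ) := by
      push_cast; ring
    have hSposR : (0:ℝ) < ∑ k ∈ Finset.Ico 1 n, ((t k : ℝ)) := by
      rw [hScast]; exact_mod_cast hSpos
    have hratio : (1:ℝ) ≤ (t n : ℝ) / ∑ k ∈ Finset.Ico 1 n, ((t k : ℝ)) := by
      rw [one_le_div hSposR, hScast]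
      exact_mod_cast hStn
    rw [Real.dist_eq, sub_zero] at hN
    have := le_abs_self ((t n : ℝ) / ∑ k ∈ Finset.Ico 1 n, ((t k : ℝ)))
    linarith
end
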